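/- For every real number x ≥ 2, the prime counting function satisfies π(x) ≤ ⌈( ((x−1)/2)·log 2 + θ(x) ) / log x ⌉, where ⌈·⌉ denotes the ceiling function. -/

import Mathlib

/-- The prime counting function `π(x)`: the number of primes `p ≤ x`. -/
noncomputable def primePi (x : ℝ) : ℕ :=
  (Finset.filter Nat.Prime (Finset.range (⌊x⌋₊ + 1))).card

/-- Chebyshev's first function `θ(x) := ∑_{p ≤ x} log p`. -/
noncomputable def chebyshevTheta (x : ℝ) : ℝ :=
  ∑ p ∈ Finset.filter Nat.Prime (Finset.range (⌊x⌋₊ + 1)), Real.log p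

def T (n : ℕ) : Finset ℕ := Finset.filter Nat.Prime (Finset.range (n + 1))

def G (n : ℕ) : Prop :=
  (((T n).card : ℝ) - 1) * Real.log ((n : ℝ) + 1) ≤
    ((n : ℝ) - 1) / 2 * Real.log 2 + ∑ p ∈ T n, Real.log p

lemma card_T_le (n : ℕ) : (T n).card ≤ n / 3 + 2 := by
  have hsub : T n ⊆ insert 2 (insert 3
      ((Finset.range (n+1)).filter (fun m => 1 < m ∧ (m % 6 = 1 ∨ m % 6 = 5)))) := by
    intro p hp
    simp only [T, Finset.mem_filter, Finset.mem_range] at hp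
    obtain ⟨hpr, hpp⟩ := hp
    simp only [Finset.mem_insert, Finset.mem_filter, Finset.mem_range]
    by_cases h2 : p = 2
    · exact Or.inl h2
    by_cases h3 : p = 3
    · exact Or.inr (Or.inl h3)
    refine Or.inr (Or.inr ⟨hpr, hpp.one_lt, ?_⟩)
    have hp2 : p % 2 ≠ 0 := by
      intro h
      rcases hpp.eq_one_or_self_of_dvd 2 (Nat.dvd_of_mod_eq_zero h) with h' | h'
      · omega
      · exact h2 h'.symm
    have hp3 : p % 3 ≠ 0 := by
      intro h
      rcases hpp.eq_one_or_self_of_dvd 3 (Nat.dvd_of_mod_eq_zero h) with h' | h'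
      · omega
      · exact h3 h'.symm
    omega
  have h1 : (T n).card ≤ 2 +
      ((Finset.range (n+1)).filter (fun m => 1 < m ∧ (m % 6 = 1 ∨ m % 6 = 5))).card := by
    have ha := Finset.card_le_card hsub
    have hb := Finset.card_insert_le 2 (insert 3
      ((Finset.range (n+1)).filter (fun m => 1 < m ∧ (m % 6 = 1 ∨ m % 6 = 5))))
    have hc := Finset.card_insert_le 3
      ((Finset.range (n+1)).filter (fun m => 1 < m ∧ (m % 6 = 1 ∨ m % 6 = 5)))
    omega
  have h2 : ((Finset.range (n+1)).filter (fun m => 1 < m ∧ (m % 6 = 1 ∨ m % 6 = 5))).card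
      ≤ (Finset.Icc 1 (n / 3)).card := by
    apply Finset.card_le_card_of_injOn (fun m => m / 3)
    · intro m hm
      simp only [Finset.mem_coe, Finset.mem_filter, Finset.mem_range] at hm
      simp only [Finset.mem_coe, Finset.mem_Icc]
      omega
    · intro a ha b hb hab
      simp only [Finset.mem_coe, Finset.mem_filter, Finset.mem_range] at ha hb
      dsimp only at hab
      omega
  rw [Nat.card_Icc] at h2
  omega

lemma two_mem_T (n : ℕ) (hn : 2 ≤ n) : 2 ∈ T n := by
  simp only [T, Finset.mem_filter, Finset.mem_range]
  exact ⟨by omega, Nat.prime_two⟩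

lemma card_T_pos (n : ℕ) (hn : 2 ≤ n) : 1 ≤ (T n).card :=
  Finset.card_pos.mpr ⟨2, two_mem_T n hn⟩

lemma step (n : ℕ) (hn : 125 ≤ n) (ih : G n) : G (n + 1) := by
  have hlog2 : (0.6931471803 : ℝ) < Real.log 2 := Real.log_two_gt_d9
  have hn1 : (0:ℝ) < (n:ℝ) + 1 := by positivity
  have hnR : (125:ℝ) ≤ (n:ℝ) := by exact_mod_cast hn
  have hΔ : Real.log ((n:ℝ) + 2) - Real.log ((n:ℝ) + 1) ≤ 1 / ((n:ℝ) + 1) := by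
    have h := Real.log_le_sub_one_of_pos (x := ((n:ℝ)+2)/((n:ℝ)+1)) (by positivity)
    rw [Real.log_div (by positivity) (by positivity)] at h
    have he : ((n:ℝ)+2)/((n:ℝ)+1) - 1 = 1/((n:ℝ)+1) := by
      rw [div_sub_one (ne_of_gt hn1)]
      ring_nf
    linarith
  have hΔ0 : 0 ≤ Real.log ((n:ℝ) + 2) - Real.log ((n:ℝ) + 1) := by
    have := Real.log_le_log (by positivity : (0:ℝ) < (n:ℝ)+1)
      (show ((n:ℝ)+1) ≤ (n:ℝ)+2 by linarith)
    linarith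
  have hcard : ((T n).card : ℝ) ≤ (n:ℝ)/3 + 2 := by
    have h := card_T_le n
    have h2 : ((n/3 : ℕ) : ℝ) ≤ (n:ℝ)/3 := Nat.cast_div_le
    have h3 : ((T n).card : ℝ) ≤ ((n/3 : ℕ) : ℝ) + 2 := by exact_mod_cast h
    linarith
  have hcpos : (1:ℝ) ≤ ((T n).card : ℝ) := by
    exact_mod_cast card_T_pos n (by omega)
  have hrange : Finset.range (n+2) = insert (n+1) (Finset.range (n+1)) := Finset.range_add_one
  have hfrac : ((n:ℝ)/3 + 2) * (1/((n:ℝ)+1)) ≤ Real.log 2 / 2 := by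
    rw [mul_one_div, div_le_div_iff₀ hn1 (by norm_num : (0:ℝ) < 2)]
    nlinarith
  by_cases hp : Nat.Prime (n+1)
  · have hTs : T (n+1) = insert (n+1) (T n) := by
      simp only [T]
      rw [show n+1+1 = n+2 from rfl, hrange, Finset.filter_insert, if_pos hp]
    have hnm : (n+1) ∉ T n := by
      simp [T]
    unfold G at ih ⊢
    rw [hTs, Finset.sum_insert hnm, Finset.card_insert_of_notMem hnm]
    push_cast
    have key : ((T n).card : ℝ) * (Real.log ((n:ℝ)+2) - Real.log ((n:ℝ)+1)) ≤ Real.log 2 / 2 := by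
      have h1 : ((T n).card : ℝ) * (Real.log ((n:ℝ)+2) - Real.log ((n:ℝ)+1))
          ≤ ((n:ℝ)/3 + 2) * (1/((n:ℝ)+1)) :=
        mul_le_mul hcard hΔ hΔ0 (by positivity)
      linarith
    have hre : (n:ℝ) + 1 + 1 = (n:ℝ) + 2 := by ring
    rw [hre]
    nlinarith [key, ih]
  · have hTs : T (n+1) = T n := by
      simp only [T]
      rw [show n+1+1 = n+2 from rfl, hrange, Finset.filter_insert, if_neg hp]
    unfold G at ih ⊢
    rw [hTs]
    push_cast
    have key : (((T n).card : ℝ) - 1) * (Real.log ((n:ℝ)+2) - Real.log ((n:ℝ)+1)) ≤ Real.log 2 / 2 := by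
      have h1 : (((T n).card : ℝ) - 1) * (Real.log ((n:ℝ)+2) - Real.log ((n:ℝ)+1))
          ≤ ((n:ℝ)/3 + 2) * (1/((n:ℝ)+1)) := by
        apply mul_le_mul (by linarith) hΔ hΔ0 (by positivity)
      linarith
    have hre : (n:ℝ) + 1 + 1 = (n:ℝ) + 2 := by ring
    rw [hre]
    nlinarith [key, ih]


lemma T_succ_prime (n : ℕ) (h : Nat.Prime (n+1)) : T (n+1) = insert (n+1) (T n) := by
  unfold T
  rw [show n+1+1 = n+2 from rfl, Finset.range_add_one, Finset.filter_insert, if_pos h]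

lemma T_succ_comp (n : ℕ) (h : ¬ Nat.Prime (n+1)) : T (n+1) = T n := by
  unfold T
  rw [show n+1+1 = n+2 from rfl, Finset.range_add_one, Finset.filter_insert, if_neg h]

lemma succ_not_mem_T (n : ℕ) : (n+1) ∉ T n := by simp [T]

lemma lb_2 : (16/16 : ℝ) * Real.log 2 ≤ Real.log 2 := by norm_num

lemma lb_3 : (25/16 : ℝ) * Real.log 2 ≤ Real.log 3 := by
  have h : ((2:ℝ)^25) ≤ 3^16 := by norm_num
  have h2 := Real.log_le_log (by positivity) h
  rw [Real.log_pow, Real.log_pow] at h2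
  push_cast at h2
  linarith

lemma lb_5 : (37/16 : ℝ) * Real.log 2 ≤ Real.log 5 := by
  have h : ((2:ℝ)^37) ≤ 5^16 := by norm_num
  have h2 := Real.log_le_log (by positivity) h
  rw [Real.log_pow, Real.log_pow] at h2
  push_cast at h2
  linarith

lemma lb_7 : (44/16 : ℝ) * Real.log 2 ≤ Real.log 7 := by
  have h : ((2:ℝ)^44) ≤ 7^16 := by norm_num
  have h2 := Real.log_le_log (by positivity) h
  rw [Real.log_pow, Real.log_pow] at h2
  push_cast at h2
  linarith

lemma lb_11 : (55/16 : ℝ) * Real.log 2 ≤ Real.log 11 := by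
  have h : ((2:ℝ)^55) ≤ 11^16 := by norm_num
  have h2 := Real.log_le_log (by positivity) h
  rw [Real.log_pow, Real.log_pow] at h2
  push_cast at h2
  linarith

lemma lb_13 : (59/16 : ℝ) * Real.log 2 ≤ Real.log 13 := by
  have h : ((2:ℝ)^59) ≤ 13^16 := by norm_num
  have h2 := Real.log_le_log (by positivity) h
  rw [Real.log_pow, Real.log_pow] at h2
  push_cast at h2
  linarith

lemma lb_17 : (65/16 : ℝ) * Real.log 2 ≤ Real.log 17 := by
  have h : ((2:ℝ)^65) ≤ 17^16 := by norm_num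
  have h2 := Real.log_le_log (by positivity) h
  rw [Real.log_pow, Real.log_pow] at h2
  push_cast at h2
  linarith

lemma lb_19 : (67/16 : ℝ) * Real.log 2 ≤ Real.log 19 := by
  have h : ((2:ℝ)^67) ≤ 19^16 := by norm_num
  have h2 := Real.log_le_log (by positivity) h
  rw [Real.log_pow, Real.log_pow] at h2
  push_cast at h2
  linarith

lemma lb_23 : (72/16 : ℝ) * Real.log 2 ≤ Real.log 23 := by
  have h : ((2:ℝ)^72) ≤ 23^16 := by norm_num
  have h2 := Real.log_le_log (by positivity) h
  rw [Real.log_pow, Real.log_pow] at h2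
  push_cast at h2
  linarith

lemma lb_29 : (77/16 : ℝ) * Real.log 2 ≤ Real.log 29 := by
  have h : ((2:ℝ)^77) ≤ 29^16 := by norm_num
  have h2 := Real.log_le_log (by positivity) h
  rw [Real.log_pow, Real.log_pow] at h2
  push_cast at h2
  linarith

lemma lb_31 : (79/16 : ℝ) * Real.log 2 ≤ Real.log 31 := by
  have h : ((2:ℝ)^79) ≤ 31^16 := by norm_num
  have h2 := Real.log_le_log (by positivity) h
  rw [Real.log_pow, Real.log_pow] at h2
  push_cast at h2
  linarith

lemma lb_37 : (83/16 : ℝ) * Real.log 2 ≤ Real.log 37 := by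
  have h : ((2:ℝ)^83) ≤ 37^16 := by norm_num
  have h2 := Real.log_le_log (by positivity) h
  rw [Real.log_pow, Real.log_pow] at h2
  push_cast at h2
  linarith

lemma lb_41 : (85/16 : ℝ) * Real.log 2 ≤ Real.log 41 := by
  have h : ((2:ℝ)^85) ≤ 41^16 := by norm_num
  have h2 := Real.log_le_log (by positivity) h
  rw [Real.log_pow, Real.log_pow] at h2
  push_cast at h2
  linarith

lemma lb_43 : (86/16 : ℝ) * Real.log 2 ≤ Real.log 43 := by
  have h : ((2:ℝ)^86) ≤ 43^16 := by norm_num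
  have h2 := Real.log_le_log (by positivity) h
  rw [Real.log_pow, Real.log_pow] at h2
  push_cast at h2
  linarith

lemma lb_47 : (88/16 : ℝ) * Real.log 2 ≤ Real.log 47 := by
  have h : ((2:ℝ)^88) ≤ 47^16 := by norm_num
  have h2 := Real.log_le_log (by positivity) h
  rw [Real.log_pow, Real.log_pow] at h2
  push_cast at h2
  linarith

lemma lb_53 : (91/16 : ℝ) * Real.log 2 ≤ Real.log 53 := by
  have h : ((2:ℝ)^91) ≤ 53^16 := by norm_num
  have h2 := Real.log_le_log (by positivity) h
  rw [Real.log_pow, Real.log_pow] at h2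
  push_cast at h2
  linarith

lemma lb_59 : (94/16 : ℝ) * Real.log 2 ≤ Real.log 59 := by
  have h : ((2:ℝ)^94) ≤ 59^16 := by norm_num
  have h2 := Real.log_le_log (by positivity) h
  rw [Real.log_pow, Real.log_pow] at h2
  push_cast at h2
  linarith

lemma lb_61 : (94/16 : ℝ) * Real.log 2 ≤ Real.log 61 := by
  have h : ((2:ℝ)^94) ≤ 61^16 := by norm_num
  have h2 := Real.log_le_log (by positivity) h
  rw [Real.log_pow, Real.log_pow] at h2
  push_cast at h2
  linarith

lemma lb_67 : (97/16 : ℝ) * Real.log 2 ≤ Real.log 67 := by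
  have h : ((2:ℝ)^97) ≤ 67^16 := by norm_num
  have h2 := Real.log_le_log (by positivity) h
  rw [Real.log_pow, Real.log_pow] at h2
  push_cast at h2
  linarith

lemma lb_71 : (98/16 : ℝ) * Real.log 2 ≤ Real.log 71 := by
  have h : ((2:ℝ)^98) ≤ 71^16 := by norm_num
  have h2 := Real.log_le_log (by positivity) h
  rw [Real.log_pow, Real.log_pow] at h2
  push_cast at h2
  linarith

lemma lb_73 : (99/16 : ℝ) * Real.log 2 ≤ Real.log 73 := by
  have h : ((2:ℝ)^99) ≤ 73^16 := by norm_num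
  have h2 := Real.log_le_log (by positivity) h
  rw [Real.log_pow, Real.log_pow] at h2
  push_cast at h2
  linarith

lemma lb_79 : (100/16 : ℝ) * Real.log 2 ≤ Real.log 79 := by
  have h : ((2:ℝ)^100) ≤ 79^16 := by norm_num
  have h2 := Real.log_le_log (by positivity) h
  rw [Real.log_pow, Real.log_pow] at h2
  push_cast at h2
  linarith

lemma lb_83 : (102/16 : ℝ) * Real.log 2 ≤ Real.log 83 := by
  have h : ((2:ℝ)^102) ≤ 83^16 := by norm_num
  have h2 := Real.log_le_log (by positivity) h
  rw [Real.log_pow, Real.log_pow] at h2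
  push_cast at h2
  linarith

lemma lb_89 : (103/16 : ℝ) * Real.log 2 ≤ Real.log 89 := by
  have h : ((2:ℝ)^103) ≤ 89^16 := by norm_num
  have h2 := Real.log_le_log (by positivity) h
  rw [Real.log_pow, Real.log_pow] at h2
  push_cast at h2
  linarith

lemma lb_97 : (105/16 : ℝ) * Real.log 2 ≤ Real.log 97 := by
  have h : ((2:ℝ)^105) ≤ 97^16 := by norm_num
  have h2 := Real.log_le_log (by positivity) h
  rw [Real.log_pow, Real.log_pow] at h2
  push_cast at h2
  linarith

lemma lb_101 : (106/16 : ℝ) * Real.log 2 ≤ Real.log 101 := by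
  have h : ((2:ℝ)^106) ≤ 101^16 := by norm_num
  have h2 := Real.log_le_log (by positivity) h
  rw [Real.log_pow, Real.log_pow] at h2
  push_cast at h2
  linarith

lemma lb_103 : (106/16 : ℝ) * Real.log 2 ≤ Real.log 103 := by
  have h : ((2:ℝ)^106) ≤ 103^16 := by norm_num
  have h2 := Real.log_le_log (by positivity) h
  rw [Real.log_pow, Real.log_pow] at h2
  push_cast at h2
  linarith

lemma lb_107 : (107/16 : ℝ) * Real.log 2 ≤ Real.log 107 := by
  have h : ((2:ℝ)^107) ≤ 107^16 := by norm_num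
  have h2 := Real.log_le_log (by positivity) h
  rw [Real.log_pow, Real.log_pow] at h2
  push_cast at h2
  linarith

lemma lb_109 : (108/16 : ℝ) * Real.log 2 ≤ Real.log 109 := by
  have h : ((2:ℝ)^108) ≤ 109^16 := by norm_num
  have h2 := Real.log_le_log (by positivity) h
  rw [Real.log_pow, Real.log_pow] at h2
  push_cast at h2
  linarith

lemma lb_113 : (109/16 : ℝ) * Real.log 2 ≤ Real.log 113 := by
  have h : ((2:ℝ)^109) ≤ 113^16 := by norm_num
  have h2 := Real.log_le_log (by positivity) h
  rw [Real.log_pow, Real.log_pow] at h2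
  push_cast at h2
  linarith

lemma ub_4 : Real.log 4 ≤ (32/16 : ℝ) * Real.log 2 := by
  have h : ((4:ℝ)^16) ≤ 2^32 := by norm_num
  have h2 := Real.log_le_log (by positivity) h
  rw [Real.log_pow, Real.log_pow] at h2
  push_cast at h2
  linarith

lemma ub_5 : Real.log 5 ≤ (38/16 : ℝ) * Real.log 2 := by
  have h : ((5:ℝ)^16) ≤ 2^38 := by norm_num
  have h2 := Real.log_le_log (by positivity) h
  rw [Real.log_pow, Real.log_pow] at h2
  push_cast at h2
  linarith

lemma ub_6 : Real.log 6 ≤ (42/16 : ℝ) * Real.log 2 := by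
  have h : ((6:ℝ)^16) ≤ 2^42 := by norm_num
  have h2 := Real.log_le_log (by positivity) h
  rw [Real.log_pow, Real.log_pow] at h2
  push_cast at h2
  linarith

lemma ub_7 : Real.log 7 ≤ (45/16 : ℝ) * Real.log 2 := by
  have h : ((7:ℝ)^16) ≤ 2^45 := by norm_num
  have h2 := Real.log_le_log (by positivity) h
  rw [Real.log_pow, Real.log_pow] at h2
  push_cast at h2
  linarith

lemma ub_8 : Real.log 8 ≤ (48/16 : ℝ) * Real.log 2 := by
  have h : ((8:ℝ)^16) ≤ 2^48 := by norm_num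
  have h2 := Real.log_le_log (by positivity) h
  rw [Real.log_pow, Real.log_pow] at h2
  push_cast at h2
  linarith

lemma ub_9 : Real.log 9 ≤ (51/16 : ℝ) * Real.log 2 := by
  have h : ((9:ℝ)^16) ≤ 2^51 := by norm_num
  have h2 := Real.log_le_log (by positivity) h
  rw [Real.log_pow, Real.log_pow] at h2
  push_cast at h2
  linarith

lemma ub_10 : Real.log 10 ≤ (54/16 : ℝ) * Real.log 2 := by
  have h : ((10:ℝ)^16) ≤ 2^54 := by norm_num
  have h2 := Real.log_le_log (by positivity) h
  rw [Real.log_pow, Real.log_pow] at h2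
  push_cast at h2
  linarith

lemma ub_11 : Real.log 11 ≤ (56/16 : ℝ) * Real.log 2 := by
  have h : ((11:ℝ)^16) ≤ 2^56 := by norm_num
  have h2 := Real.log_le_log (by positivity) h
  rw [Real.log_pow, Real.log_pow] at h2
  push_cast at h2
  linarith

lemma ub_12 : Real.log 12 ≤ (58/16 : ℝ) * Real.log 2 := by
  have h : ((12:ℝ)^16) ≤ 2^58 := by norm_num
  have h2 := Real.log_le_log (by positivity) h
  rw [Real.log_pow, Real.log_pow] at h2
  push_cast at h2
  linarith

lemma ub_13 : Real.log 13 ≤ (60/16 : ℝ) * Real.log 2 := by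
  have h : ((13:ℝ)^16) ≤ 2^60 := by norm_num
  have h2 := Real.log_le_log (by positivity) h
  rw [Real.log_pow, Real.log_pow] at h2
  push_cast at h2
  linarith

lemma ub_14 : Real.log 14 ≤ (61/16 : ℝ) * Real.log 2 := by
  have h : ((14:ℝ)^16) ≤ 2^61 := by norm_num
  have h2 := Real.log_le_log (by positivity) h
  rw [Real.log_pow, Real.log_pow] at h2
  push_cast at h2
  linarith

lemma ub_15 : Real.log 15 ≤ (63/16 : ℝ) * Real.log 2 := by
  have h : ((15:ℝ)^16) ≤ 2^63 := by norm_num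
  have h2 := Real.log_le_log (by positivity) h
  rw [Real.log_pow, Real.log_pow] at h2
  push_cast at h2
  linarith

lemma ub_16 : Real.log 16 ≤ (64/16 : ℝ) * Real.log 2 := by
  have h : ((16:ℝ)^16) ≤ 2^64 := by norm_num
  have h2 := Real.log_le_log (by positivity) h
  rw [Real.log_pow, Real.log_pow] at h2
  push_cast at h2
  linarith

lemma ub_17 : Real.log 17 ≤ (66/16 : ℝ) * Real.log 2 := by
  have h : ((17:ℝ)^16) ≤ 2^66 := by norm_num
  have h2 := Real.log_le_log (by positivity) h
  rw [Real.log_pow, Real.log_pow] at h2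
  push_cast at h2
  linarith

lemma ub_18 : Real.log 18 ≤ (67/16 : ℝ) * Real.log 2 := by
  have h : ((18:ℝ)^16) ≤ 2^67 := by norm_num
  have h2 := Real.log_le_log (by positivity) h
  rw [Real.log_pow, Real.log_pow] at h2
  push_cast at h2
  linarith

lemma ub_19 : Real.log 19 ≤ (68/16 : ℝ) * Real.log 2 := by
  have h : ((19:ℝ)^16) ≤ 2^68 := by norm_num
  have h2 := Real.log_le_log (by positivity) h
  rw [Real.log_pow, Real.log_pow] at h2
  push_cast at h2
  linarith

lemma ub_20 : Real.log 20 ≤ (70/16 : ℝ) * Real.log 2 := by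
  have h : ((20:ℝ)^16) ≤ 2^70 := by norm_num
  have h2 := Real.log_le_log (by positivity) h
  rw [Real.log_pow, Real.log_pow] at h2
  push_cast at h2
  linarith

lemma ub_21 : Real.log 21 ≤ (71/16 : ℝ) * Real.log 2 := by
  have h : ((21:ℝ)^16) ≤ 2^71 := by norm_num
  have h2 := Real.log_le_log (by positivity) h
  rw [Real.log_pow, Real.log_pow] at h2
  push_cast at h2
  linarith

lemma ub_22 : Real.log 22 ≤ (72/16 : ℝ) * Real.log 2 := by
  have h : ((22:ℝ)^16) ≤ 2^72 := by norm_num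
  have h2 := Real.log_le_log (by positivity) h
  rw [Real.log_pow, Real.log_pow] at h2
  push_cast at h2
  linarith

lemma ub_23 : Real.log 23 ≤ (73/16 : ℝ) * Real.log 2 := by
  have h : ((23:ℝ)^16) ≤ 2^73 := by norm_num
  have h2 := Real.log_le_log (by positivity) h
  rw [Real.log_pow, Real.log_pow] at h2
  push_cast at h2
  linarith

lemma ub_24 : Real.log 24 ≤ (74/16 : ℝ) * Real.log 2 := by
  have h : ((24:ℝ)^16) ≤ 2^74 := by norm_num
  have h2 := Real.log_le_log (by positivity) h
  rw [Real.log_pow, Real.log_pow] at h2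
  push_cast at h2
  linarith

lemma ub_25 : Real.log 25 ≤ (75/16 : ℝ) * Real.log 2 := by
  have h : ((25:ℝ)^16) ≤ 2^75 := by norm_num
  have h2 := Real.log_le_log (by positivity) h
  rw [Real.log_pow, Real.log_pow] at h2
  push_cast at h2
  linarith

lemma ub_26 : Real.log 26 ≤ (76/16 : ℝ) * Real.log 2 := by
  have h : ((26:ℝ)^16) ≤ 2^76 := by norm_num
  have h2 := Real.log_le_log (by positivity) h
  rw [Real.log_pow, Real.log_pow] at h2
  push_cast at h2
  linarith

lemma ub_27 : Real.log 27 ≤ (77/16 : ℝ) * Real.log 2 := by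
  have h : ((27:ℝ)^16) ≤ 2^77 := by norm_num
  have h2 := Real.log_le_log (by positivity) h
  rw [Real.log_pow, Real.log_pow] at h2
  push_cast at h2
  linarith

lemma ub_28 : Real.log 28 ≤ (77/16 : ℝ) * Real.log 2 := by
  have h : ((28:ℝ)^16) ≤ 2^77 := by norm_num
  have h2 := Real.log_le_log (by positivity) h
  rw [Real.log_pow, Real.log_pow] at h2
  push_cast at h2
  linarith

lemma ub_29 : Real.log 29 ≤ (78/16 : ℝ) * Real.log 2 := by
  have h : ((29:ℝ)^16) ≤ 2^78 := by norm_num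
  have h2 := Real.log_le_log (by positivity) h
  rw [Real.log_pow, Real.log_pow] at h2
  push_cast at h2
  linarith

lemma ub_30 : Real.log 30 ≤ (79/16 : ℝ) * Real.log 2 := by
  have h : ((30:ℝ)^16) ≤ 2^79 := by norm_num
  have h2 := Real.log_le_log (by positivity) h
  rw [Real.log_pow, Real.log_pow] at h2
  push_cast at h2
  linarith

lemma ub_31 : Real.log 31 ≤ (80/16 : ℝ) * Real.log 2 := by
  have h : ((31:ℝ)^16) ≤ 2^80 := by norm_num
  have h2 := Real.log_le_log (by positivity) h
  rw [Real.log_pow, Real.log_pow] at h2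
  push_cast at h2
  linarith

lemma ub_32 : Real.log 32 ≤ (80/16 : ℝ) * Real.log 2 := by
  have h : ((32:ℝ)^16) ≤ 2^80 := by norm_num
  have h2 := Real.log_le_log (by positivity) h
  rw [Real.log_pow, Real.log_pow] at h2
  push_cast at h2
  linarith

lemma ub_33 : Real.log 33 ≤ (81/16 : ℝ) * Real.log 2 := by
  have h : ((33:ℝ)^16) ≤ 2^81 := by norm_num
  have h2 := Real.log_le_log (by positivity) h
  rw [Real.log_pow, Real.log_pow] at h2
  push_cast at h2
  linarith

lemma ub_34 : Real.log 34 ≤ (82/16 : ℝ) * Real.log 2 := by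
  have h : ((34:ℝ)^16) ≤ 2^82 := by norm_num
  have h2 := Real.log_le_log (by positivity) h
  rw [Real.log_pow, Real.log_pow] at h2
  push_cast at h2
  linarith

lemma ub_35 : Real.log 35 ≤ (83/16 : ℝ) * Real.log 2 := by
  have h : ((35:ℝ)^16) ≤ 2^83 := by norm_num
  have h2 := Real.log_le_log (by positivity) h
  rw [Real.log_pow, Real.log_pow] at h2
  push_cast at h2
  linarith

lemma ub_36 : Real.log 36 ≤ (83/16 : ℝ) * Real.log 2 := by
  have h : ((36:ℝ)^16) ≤ 2^83 := by norm_num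
  have h2 := Real.log_le_log (by positivity) h
  rw [Real.log_pow, Real.log_pow] at h2
  push_cast at h2
  linarith

lemma ub_37 : Real.log 37 ≤ (84/16 : ℝ) * Real.log 2 := by
  have h : ((37:ℝ)^16) ≤ 2^84 := by norm_num
  have h2 := Real.log_le_log (by positivity) h
  rw [Real.log_pow, Real.log_pow] at h2
  push_cast at h2
  linarith

lemma ub_38 : Real.log 38 ≤ (84/16 : ℝ) * Real.log 2 := by
  have h : ((38:ℝ)^16) ≤ 2^84 := by norm_num
  have h2 := Real.log_le_log (by positivity) h
  rw [Real.log_pow, Real.log_pow] at h2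
  push_cast at h2
  linarith

lemma ub_39 : Real.log 39 ≤ (85/16 : ℝ) * Real.log 2 := by
  have h : ((39:ℝ)^16) ≤ 2^85 := by norm_num
  have h2 := Real.log_le_log (by positivity) h
  rw [Real.log_pow, Real.log_pow] at h2
  push_cast at h2
  linarith

lemma ub_40 : Real.log 40 ≤ (86/16 : ℝ) * Real.log 2 := by
  have h : ((40:ℝ)^16) ≤ 2^86 := by norm_num
  have h2 := Real.log_le_log (by positivity) h
  rw [Real.log_pow, Real.log_pow] at h2
  push_cast at h2
  linarith

lemma ub_41 : Real.log 41 ≤ (86/16 : ℝ) * Real.log 2 := by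
  have h : ((41:ℝ)^16) ≤ 2^86 := by norm_num
  have h2 := Real.log_le_log (by positivity) h
  rw [Real.log_pow, Real.log_pow] at h2
  push_cast at h2
  linarith

lemma ub_42 : Real.log 42 ≤ (87/16 : ℝ) * Real.log 2 := by
  have h : ((42:ℝ)^16) ≤ 2^87 := by norm_num
  have h2 := Real.log_le_log (by positivity) h
  rw [Real.log_pow, Real.log_pow] at h2
  push_cast at h2
  linarith

lemma ub_43 : Real.log 43 ≤ (87/16 : ℝ) * Real.log 2 := by
  have h : ((43:ℝ)^16) ≤ 2^87 := by norm_num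
  have h2 := Real.log_le_log (by positivity) h
  rw [Real.log_pow, Real.log_pow] at h2
  push_cast at h2
  linarith

lemma ub_44 : Real.log 44 ≤ (88/16 : ℝ) * Real.log 2 := by
  have h : ((44:ℝ)^16) ≤ 2^88 := by norm_num
  have h2 := Real.log_le_log (by positivity) h
  rw [Real.log_pow, Real.log_pow] at h2
  push_cast at h2
  linarith

lemma ub_45 : Real.log 45 ≤ (88/16 : ℝ) * Real.log 2 := by
  have h : ((45:ℝ)^16) ≤ 2^88 := by norm_num
  have h2 := Real.log_le_log (by positivity) h
  rw [Real.log_pow, Real.log_pow] at h2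
  push_cast at h2
  linarith

lemma ub_46 : Real.log 46 ≤ (89/16 : ℝ) * Real.log 2 := by
  have h : ((46:ℝ)^16) ≤ 2^89 := by norm_num
  have h2 := Real.log_le_log (by positivity) h
  rw [Real.log_pow, Real.log_pow] at h2
  push_cast at h2
  linarith

lemma ub_47 : Real.log 47 ≤ (89/16 : ℝ) * Real.log 2 := by
  have h : ((47:ℝ)^16) ≤ 2^89 := by norm_num
  have h2 := Real.log_le_log (by positivity) h
  rw [Real.log_pow, Real.log_pow] at h2
  push_cast at h2
  linarith

lemma ub_48 : Real.log 48 ≤ (90/16 : ℝ) * Real.log 2 := by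
  have h : ((48:ℝ)^16) ≤ 2^90 := by norm_num
  have h2 := Real.log_le_log (by positivity) h
  rw [Real.log_pow, Real.log_pow] at h2
  push_cast at h2
  linarith

lemma ub_49 : Real.log 49 ≤ (90/16 : ℝ) * Real.log 2 := by
  have h : ((49:ℝ)^16) ≤ 2^90 := by norm_num
  have h2 := Real.log_le_log (by positivity) h
  rw [Real.log_pow, Real.log_pow] at h2
  push_cast at h2
  linarith

lemma ub_50 : Real.log 50 ≤ (91/16 : ℝ) * Real.log 2 := by
  have h : ((50:ℝ)^16) ≤ 2^91 := by norm_num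
  have h2 := Real.log_le_log (by positivity) h
  rw [Real.log_pow, Real.log_pow] at h2
  push_cast at h2
  linarith

lemma ub_51 : Real.log 51 ≤ (91/16 : ℝ) * Real.log 2 := by
  have h : ((51:ℝ)^16) ≤ 2^91 := by norm_num
  have h2 := Real.log_le_log (by positivity) h
  rw [Real.log_pow, Real.log_pow] at h2
  push_cast at h2
  linarith

lemma ub_52 : Real.log 52 ≤ (92/16 : ℝ) * Real.log 2 := by
  have h : ((52:ℝ)^16) ≤ 2^92 := by norm_num
  have h2 := Real.log_le_log (by positivity) h
  rw [Real.log_pow, Real.log_pow] at h2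
  push_cast at h2
  linarith

lemma ub_53 : Real.log 53 ≤ (92/16 : ℝ) * Real.log 2 := by
  have h : ((53:ℝ)^16) ≤ 2^92 := by norm_num
  have h2 := Real.log_le_log (by positivity) h
  rw [Real.log_pow, Real.log_pow] at h2
  push_cast at h2
  linarith

lemma ub_54 : Real.log 54 ≤ (93/16 : ℝ) * Real.log 2 := by
  have h : ((54:ℝ)^16) ≤ 2^93 := by norm_num
  have h2 := Real.log_le_log (by positivity) h
  rw [Real.log_pow, Real.log_pow] at h2
  push_cast at h2
  linarith

lemma ub_55 : Real.log 55 ≤ (93/16 : ℝ) * Real.log 2 := by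
  have h : ((55:ℝ)^16) ≤ 2^93 := by norm_num
  have h2 := Real.log_le_log (by positivity) h
  rw [Real.log_pow, Real.log_pow] at h2
  push_cast at h2
  linarith

lemma ub_56 : Real.log 56 ≤ (93/16 : ℝ) * Real.log 2 := by
  have h : ((56:ℝ)^16) ≤ 2^93 := by norm_num
  have h2 := Real.log_le_log (by positivity) h
  rw [Real.log_pow, Real.log_pow] at h2
  push_cast at h2
  linarith

lemma ub_57 : Real.log 57 ≤ (94/16 : ℝ) * Real.log 2 := by
  have h : ((57:ℝ)^16) ≤ 2^94 := by norm_num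
  have h2 := Real.log_le_log (by positivity) h
  rw [Real.log_pow, Real.log_pow] at h2
  push_cast at h2
  linarith

lemma ub_58 : Real.log 58 ≤ (94/16 : ℝ) * Real.log 2 := by
  have h : ((58:ℝ)^16) ≤ 2^94 := by norm_num
  have h2 := Real.log_le_log (by positivity) h
  rw [Real.log_pow, Real.log_pow] at h2
  push_cast at h2
  linarith

lemma ub_59 : Real.log 59 ≤ (95/16 : ℝ) * Real.log 2 := by
  have h : ((59:ℝ)^16) ≤ 2^95 := by norm_num
  have h2 := Real.log_le_log (by positivity) h
  rw [Real.log_pow, Real.log_pow] at h2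
  push_cast at h2
  linarith

lemma ub_60 : Real.log 60 ≤ (95/16 : ℝ) * Real.log 2 := by
  have h : ((60:ℝ)^16) ≤ 2^95 := by norm_num
  have h2 := Real.log_le_log (by positivity) h
  rw [Real.log_pow, Real.log_pow] at h2
  push_cast at h2
  linarith

lemma ub_61 : Real.log 61 ≤ (95/16 : ℝ) * Real.log 2 := by
  have h : ((61:ℝ)^16) ≤ 2^95 := by norm_num
  have h2 := Real.log_le_log (by positivity) h
  rw [Real.log_pow, Real.log_pow] at h2
  push_cast at h2
  linarith

lemma ub_62 : Real.log 62 ≤ (96/16 : ℝ) * Real.log 2 := by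
  have h : ((62:ℝ)^16) ≤ 2^96 := by norm_num
  have h2 := Real.log_le_log (by positivity) h
  rw [Real.log_pow, Real.log_pow] at h2
  push_cast at h2
  linarith

lemma ub_63 : Real.log 63 ≤ (96/16 : ℝ) * Real.log 2 := by
  have h : ((63:ℝ)^16) ≤ 2^96 := by norm_num
  have h2 := Real.log_le_log (by positivity) h
  rw [Real.log_pow, Real.log_pow] at h2
  push_cast at h2
  linarith

lemma ub_64 : Real.log 64 ≤ (96/16 : ℝ) * Real.log 2 := by
  have h : ((64:ℝ)^16) ≤ 2^96 := by norm_num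
  have h2 := Real.log_le_log (by positivity) h
  rw [Real.log_pow, Real.log_pow] at h2
  push_cast at h2
  linarith

lemma ub_65 : Real.log 65 ≤ (97/16 : ℝ) * Real.log 2 := by
  have h : ((65:ℝ)^16) ≤ 2^97 := by norm_num
  have h2 := Real.log_le_log (by positivity) h
  rw [Real.log_pow, Real.log_pow] at h2
  push_cast at h2
  linarith

lemma ub_66 : Real.log 66 ≤ (97/16 : ℝ) * Real.log 2 := by
  have h : ((66:ℝ)^16) ≤ 2^97 := by norm_num
  have h2 := Real.log_le_log (by positivity) h
  rw [Real.log_pow, Real.log_pow] at h2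
  push_cast at h2
  linarith

lemma ub_67 : Real.log 67 ≤ (98/16 : ℝ) * Real.log 2 := by
  have h : ((67:ℝ)^16) ≤ 2^98 := by norm_num
  have h2 := Real.log_le_log (by positivity) h
  rw [Real.log_pow, Real.log_pow] at h2
  push_cast at h2
  linarith

lemma ub_68 : Real.log 68 ≤ (98/16 : ℝ) * Real.log 2 := by
  have h : ((68:ℝ)^16) ≤ 2^98 := by norm_num
  have h2 := Real.log_le_log (by positivity) h
  rw [Real.log_pow, Real.log_pow] at h2
  push_cast at h2
  linarith

lemma ub_69 : Real.log 69 ≤ (98/16 : ℝ) * Real.log 2 := by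
  have h : ((69:ℝ)^16) ≤ 2^98 := by norm_num
  have h2 := Real.log_le_log (by positivity) h
  rw [Real.log_pow, Real.log_pow] at h2
  push_cast at h2
  linarith

lemma ub_70 : Real.log 70 ≤ (99/16 : ℝ) * Real.log 2 := by
  have h : ((70:ℝ)^16) ≤ 2^99 := by norm_num
  have h2 := Real.log_le_log (by positivity) h
  rw [Real.log_pow, Real.log_pow] at h2
  push_cast at h2
  linarith

lemma ub_71 : Real.log 71 ≤ (99/16 : ℝ) * Real.log 2 := by
  have h : ((71:ℝ)^16) ≤ 2^99 := by norm_num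
  have h2 := Real.log_le_log (by positivity) h
  rw [Real.log_pow, Real.log_pow] at h2
  push_cast at h2
  linarith

lemma ub_72 : Real.log 72 ≤ (99/16 : ℝ) * Real.log 2 := by
  have h : ((72:ℝ)^16) ≤ 2^99 := by norm_num
  have h2 := Real.log_le_log (by positivity) h
  rw [Real.log_pow, Real.log_pow] at h2
  push_cast at h2
  linarith

lemma ub_73 : Real.log 73 ≤ (100/16 : ℝ) * Real.log 2 := by
  have h : ((73:ℝ)^16) ≤ 2^100 := by norm_num
  have h2 := Real.log_le_log (by positivity) h
  rw [Real.log_pow, Real.log_pow] at h2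
  push_cast at h2
  linarith

lemma ub_74 : Real.log 74 ≤ (100/16 : ℝ) * Real.log 2 := by
  have h : ((74:ℝ)^16) ≤ 2^100 := by norm_num
  have h2 := Real.log_le_log (by positivity) h
  rw [Real.log_pow, Real.log_pow] at h2
  push_cast at h2
  linarith

lemma ub_75 : Real.log 75 ≤ (100/16 : ℝ) * Real.log 2 := by
  have h : ((75:ℝ)^16) ≤ 2^100 := by norm_num
  have h2 := Real.log_le_log (by positivity) h
  rw [Real.log_pow, Real.log_pow] at h2
  push_cast at h2
  linarith

lemma ub_76 : Real.log 76 ≤ (100/16 : ℝ) * Real.log 2 := by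
  have h : ((76:ℝ)^16) ≤ 2^100 := by norm_num
  have h2 := Real.log_le_log (by positivity) h
  rw [Real.log_pow, Real.log_pow] at h2
  push_cast at h2
  linarith

lemma ub_77 : Real.log 77 ≤ (101/16 : ℝ) * Real.log 2 := by
  have h : ((77:ℝ)^16) ≤ 2^101 := by norm_num
  have h2 := Real.log_le_log (by positivity) h
  rw [Real.log_pow, Real.log_pow] at h2
  push_cast at h2
  linarith

lemma ub_78 : Real.log 78 ≤ (101/16 : ℝ) * Real.log 2 := by
  have h : ((78:ℝ)^16) ≤ 2^101 := by norm_num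
  have h2 := Real.log_le_log (by positivity) h
  rw [Real.log_pow, Real.log_pow] at h2
  push_cast at h2
  linarith

lemma ub_79 : Real.log 79 ≤ (101/16 : ℝ) * Real.log 2 := by
  have h : ((79:ℝ)^16) ≤ 2^101 := by norm_num
  have h2 := Real.log_le_log (by positivity) h
  rw [Real.log_pow, Real.log_pow] at h2
  push_cast at h2
  linarith

lemma ub_80 : Real.log 80 ≤ (102/16 : ℝ) * Real.log 2 := by
  have h : ((80:ℝ)^16) ≤ 2^102 := by norm_num
  have h2 := Real.log_le_log (by positivity) h
  rw [Real.log_pow, Real.log_pow] at h2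
  push_cast at h2
  linarith

lemma ub_81 : Real.log 81 ≤ (102/16 : ℝ) * Real.log 2 := by
  have h : ((81:ℝ)^16) ≤ 2^102 := by norm_num
  have h2 := Real.log_le_log (by positivity) h
  rw [Real.log_pow, Real.log_pow] at h2
  push_cast at h2
  linarith

lemma ub_82 : Real.log 82 ≤ (102/16 : ℝ) * Real.log 2 := by
  have h : ((82:ℝ)^16) ≤ 2^102 := by norm_num
  have h2 := Real.log_le_log (by positivity) h
  rw [Real.log_pow, Real.log_pow] at h2
  push_cast at h2
  linarith

lemma ub_83 : Real.log 83 ≤ (103/16 : ℝ) * Real.log 2 := by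
  have h : ((83:ℝ)^16) ≤ 2^103 := by norm_num
  have h2 := Real.log_le_log (by positivity) h
  rw [Real.log_pow, Real.log_pow] at h2
  push_cast at h2
  linarith

lemma ub_84 : Real.log 84 ≤ (103/16 : ℝ) * Real.log 2 := by
  have h : ((84:ℝ)^16) ≤ 2^103 := by norm_num
  have h2 := Real.log_le_log (by positivity) h
  rw [Real.log_pow, Real.log_pow] at h2
  push_cast at h2
  linarith

lemma ub_85 : Real.log 85 ≤ (103/16 : ℝ) * Real.log 2 := by
  have h : ((85:ℝ)^16) ≤ 2^103 := by norm_num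
  have h2 := Real.log_le_log (by positivity) h
  rw [Real.log_pow, Real.log_pow] at h2
  push_cast at h2
  linarith

lemma ub_86 : Real.log 86 ≤ (103/16 : ℝ) * Real.log 2 := by
  have h : ((86:ℝ)^16) ≤ 2^103 := by norm_num
  have h2 := Real.log_le_log (by positivity) h
  rw [Real.log_pow, Real.log_pow] at h2
  push_cast at h2
  linarith

lemma ub_87 : Real.log 87 ≤ (104/16 : ℝ) * Real.log 2 := by
  have h : ((87:ℝ)^16) ≤ 2^104 := by norm_num
  have h2 := Real.log_le_log (by positivity) h
  rw [Real.log_pow, Real.log_pow] at h2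
  push_cast at h2
  linarith

lemma ub_88 : Real.log 88 ≤ (104/16 : ℝ) * Real.log 2 := by
  have h : ((88:ℝ)^16) ≤ 2^104 := by norm_num
  have h2 := Real.log_le_log (by positivity) h
  rw [Real.log_pow, Real.log_pow] at h2
  push_cast at h2
  linarith

lemma ub_89 : Real.log 89 ≤ (104/16 : ℝ) * Real.log 2 := by
  have h : ((89:ℝ)^16) ≤ 2^104 := by norm_num
  have h2 := Real.log_le_log (by positivity) h
  rw [Real.log_pow, Real.log_pow] at h2
  push_cast at h2
  linarith

lemma ub_90 : Real.log 90 ≤ (104/16 : ℝ) * Real.log 2 := by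
  have h : ((90:ℝ)^16) ≤ 2^104 := by norm_num
  have h2 := Real.log_le_log (by positivity) h
  rw [Real.log_pow, Real.log_pow] at h2
  push_cast at h2
  linarith

lemma ub_91 : Real.log 91 ≤ (105/16 : ℝ) * Real.log 2 := by
  have h : ((91:ℝ)^16) ≤ 2^105 := by norm_num
  have h2 := Real.log_le_log (by positivity) h
  rw [Real.log_pow, Real.log_pow] at h2
  push_cast at h2
  linarith

lemma ub_92 : Real.log 92 ≤ (105/16 : ℝ) * Real.log 2 := by
  have h : ((92:ℝ)^16) ≤ 2^105 := by norm_num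
  have h2 := Real.log_le_log (by positivity) h
  rw [Real.log_pow, Real.log_pow] at h2
  push_cast at h2
  linarith

lemma ub_93 : Real.log 93 ≤ (105/16 : ℝ) * Real.log 2 := by
  have h : ((93:ℝ)^16) ≤ 2^105 := by norm_num
  have h2 := Real.log_le_log (by positivity) h
  rw [Real.log_pow, Real.log_pow] at h2
  push_cast at h2
  linarith

lemma ub_94 : Real.log 94 ≤ (105/16 : ℝ) * Real.log 2 := by
  have h : ((94:ℝ)^16) ≤ 2^105 := by norm_num
  have h2 := Real.log_le_log (by positivity) h
  rw [Real.log_pow, Real.log_pow] at h2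
  push_cast at h2
  linarith

lemma ub_95 : Real.log 95 ≤ (106/16 : ℝ) * Real.log 2 := by
  have h : ((95:ℝ)^16) ≤ 2^106 := by norm_num
  have h2 := Real.log_le_log (by positivity) h
  rw [Real.log_pow, Real.log_pow] at h2
  push_cast at h2
  linarith

lemma ub_96 : Real.log 96 ≤ (106/16 : ℝ) * Real.log 2 := by
  have h : ((96:ℝ)^16) ≤ 2^106 := by norm_num
  have h2 := Real.log_le_log (by positivity) h
  rw [Real.log_pow, Real.log_pow] at h2
  push_cast at h2
  linarith

lemma ub_97 : Real.log 97 ≤ (106/16 : ℝ) * Real.log 2 := by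
  have h : ((97:ℝ)^16) ≤ 2^106 := by norm_num
  have h2 := Real.log_le_log (by positivity) h
  rw [Real.log_pow, Real.log_pow] at h2
  push_cast at h2
  linarith

lemma ub_98 : Real.log 98 ≤ (106/16 : ℝ) * Real.log 2 := by
  have h : ((98:ℝ)^16) ≤ 2^106 := by norm_num
  have h2 := Real.log_le_log (by positivity) h
  rw [Real.log_pow, Real.log_pow] at h2
  push_cast at h2
  linarith

lemma ub_99 : Real.log 99 ≤ (107/16 : ℝ) * Real.log 2 := by
  have h : ((99:ℝ)^16) ≤ 2^107 := by norm_num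
  have h2 := Real.log_le_log (by positivity) h
  rw [Real.log_pow, Real.log_pow] at h2
  push_cast at h2
  linarith

lemma ub_100 : Real.log 100 ≤ (107/16 : ℝ) * Real.log 2 := by
  have h : ((100:ℝ)^16) ≤ 2^107 := by norm_num
  have h2 := Real.log_le_log (by positivity) h
  rw [Real.log_pow, Real.log_pow] at h2
  push_cast at h2
  linarith

lemma ub_101 : Real.log 101 ≤ (107/16 : ℝ) * Real.log 2 := by
  have h : ((101:ℝ)^16) ≤ 2^107 := by norm_num
  have h2 := Real.log_le_log (by positivity) h
  rw [Real.log_pow, Real.log_pow] at h2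
  push_cast at h2
  linarith

lemma ub_102 : Real.log 102 ≤ (107/16 : ℝ) * Real.log 2 := by
  have h : ((102:ℝ)^16) ≤ 2^107 := by norm_num
  have h2 := Real.log_le_log (by positivity) h
  rw [Real.log_pow, Real.log_pow] at h2
  push_cast at h2
  linarith

lemma ub_103 : Real.log 103 ≤ (107/16 : ℝ) * Real.log 2 := by
  have h : ((103:ℝ)^16) ≤ 2^107 := by norm_num
  have h2 := Real.log_le_log (by positivity) h
  rw [Real.log_pow, Real.log_pow] at h2
  push_cast at h2
  linarith

lemma ub_104 : Real.log 104 ≤ (108/16 : ℝ) * Real.log 2 := by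
  have h : ((104:ℝ)^16) ≤ 2^108 := by norm_num
  have h2 := Real.log_le_log (by positivity) h
  rw [Real.log_pow, Real.log_pow] at h2
  push_cast at h2
  linarith

lemma ub_105 : Real.log 105 ≤ (108/16 : ℝ) * Real.log 2 := by
  have h : ((105:ℝ)^16) ≤ 2^108 := by norm_num
  have h2 := Real.log_le_log (by positivity) h
  rw [Real.log_pow, Real.log_pow] at h2
  push_cast at h2
  linarith

lemma ub_106 : Real.log 106 ≤ (108/16 : ℝ) * Real.log 2 := by
  have h : ((106:ℝ)^16) ≤ 2^108 := by norm_num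
  have h2 := Real.log_le_log (by positivity) h
  rw [Real.log_pow, Real.log_pow] at h2
  push_cast at h2
  linarith

lemma ub_107 : Real.log 107 ≤ (108/16 : ℝ) * Real.log 2 := by
  have h : ((107:ℝ)^16) ≤ 2^108 := by norm_num
  have h2 := Real.log_le_log (by positivity) h
  rw [Real.log_pow, Real.log_pow] at h2
  push_cast at h2
  linarith

lemma ub_108 : Real.log 108 ≤ (109/16 : ℝ) * Real.log 2 := by
  have h : ((108:ℝ)^16) ≤ 2^109 := by norm_num
  have h2 := Real.log_le_log (by positivity) h
  rw [Real.log_pow, Real.log_pow] at h2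
  push_cast at h2
  linarith

lemma ub_109 : Real.log 109 ≤ (109/16 : ℝ) * Real.log 2 := by
  have h : ((109:ℝ)^16) ≤ 2^109 := by norm_num
  have h2 := Real.log_le_log (by positivity) h
  rw [Real.log_pow, Real.log_pow] at h2
  push_cast at h2
  linarith

lemma ub_110 : Real.log 110 ≤ (109/16 : ℝ) * Real.log 2 := by
  have h : ((110:ℝ)^16) ≤ 2^109 := by norm_num
  have h2 := Real.log_le_log (by positivity) h
  rw [Real.log_pow, Real.log_pow] at h2
  push_cast at h2
  linarith

lemma ub_111 : Real.log 111 ≤ (109/16 : ℝ) * Real.log 2 := by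
  have h : ((111:ℝ)^16) ≤ 2^109 := by norm_num
  have h2 := Real.log_le_log (by positivity) h
  rw [Real.log_pow, Real.log_pow] at h2
  push_cast at h2
  linarith

lemma ub_112 : Real.log 112 ≤ (109/16 : ℝ) * Real.log 2 := by
  have h : ((112:ℝ)^16) ≤ 2^109 := by norm_num
  have h2 := Real.log_le_log (by positivity) h
  rw [Real.log_pow, Real.log_pow] at h2
  push_cast at h2
  linarith

lemma ub_113 : Real.log 113 ≤ (110/16 : ℝ) * Real.log 2 := by
  have h : ((113:ℝ)^16) ≤ 2^110 := by norm_num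
  have h2 := Real.log_le_log (by positivity) h
  rw [Real.log_pow, Real.log_pow] at h2
  push_cast at h2
  linarith

lemma ub_114 : Real.log 114 ≤ (110/16 : ℝ) * Real.log 2 := by
  have h : ((114:ℝ)^16) ≤ 2^110 := by norm_num
  have h2 := Real.log_le_log (by positivity) h
  rw [Real.log_pow, Real.log_pow] at h2
  push_cast at h2
  linarith

lemma ub_115 : Real.log 115 ≤ (110/16 : ℝ) * Real.log 2 := by
  have h : ((115:ℝ)^16) ≤ 2^110 := by norm_num
  have h2 := Real.log_le_log (by positivity) h
  rw [Real.log_pow, Real.log_pow] at h2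
  push_cast at h2
  linarith

lemma ub_116 : Real.log 116 ≤ (110/16 : ℝ) * Real.log 2 := by
  have h : ((116:ℝ)^16) ≤ 2^110 := by norm_num
  have h2 := Real.log_le_log (by positivity) h
  rw [Real.log_pow, Real.log_pow] at h2
  push_cast at h2
  linarith

lemma ub_117 : Real.log 117 ≤ (110/16 : ℝ) * Real.log 2 := by
  have h : ((117:ℝ)^16) ≤ 2^110 := by norm_num
  have h2 := Real.log_le_log (by positivity) h
  rw [Real.log_pow, Real.log_pow] at h2
  push_cast at h2
  linarith

lemma ub_118 : Real.log 118 ≤ (111/16 : ℝ) * Real.log 2 := by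
  have h : ((118:ℝ)^16) ≤ 2^111 := by norm_num
  have h2 := Real.log_le_log (by positivity) h
  rw [Real.log_pow, Real.log_pow] at h2
  push_cast at h2
  linarith

lemma ub_119 : Real.log 119 ≤ (111/16 : ℝ) * Real.log 2 := by
  have h : ((119:ℝ)^16) ≤ 2^111 := by norm_num
  have h2 := Real.log_le_log (by positivity) h
  rw [Real.log_pow, Real.log_pow] at h2
  push_cast at h2
  linarith

lemma ub_120 : Real.log 120 ≤ (111/16 : ℝ) * Real.log 2 := by
  have h : ((120:ℝ)^16) ≤ 2^111 := by norm_num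
  have h2 := Real.log_le_log (by positivity) h
  rw [Real.log_pow, Real.log_pow] at h2
  push_cast at h2
  linarith

lemma ub_121 : Real.log 121 ≤ (111/16 : ℝ) * Real.log 2 := by
  have h : ((121:ℝ)^16) ≤ 2^111 := by norm_num
  have h2 := Real.log_le_log (by positivity) h
  rw [Real.log_pow, Real.log_pow] at h2
  push_cast at h2
  linarith

lemma ub_122 : Real.log 122 ≤ (111/16 : ℝ) * Real.log 2 := by
  have h : ((122:ℝ)^16) ≤ 2^111 := by norm_num
  have h2 := Real.log_le_log (by positivity) h
  rw [Real.log_pow, Real.log_pow] at h2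
  push_cast at h2
  linarith

lemma ub_123 : Real.log 123 ≤ (112/16 : ℝ) * Real.log 2 := by
  have h : ((123:ℝ)^16) ≤ 2^112 := by norm_num
  have h2 := Real.log_le_log (by positivity) h
  rw [Real.log_pow, Real.log_pow] at h2
  push_cast at h2
  linarith

lemma ub_124 : Real.log 124 ≤ (112/16 : ℝ) * Real.log 2 := by
  have h : ((124:ℝ)^16) ≤ 2^112 := by norm_num
  have h2 := Real.log_le_log (by positivity) h
  rw [Real.log_pow, Real.log_pow] at h2
  push_cast at h2
  linarith

lemma ub_125 : Real.log 125 ≤ (112/16 : ℝ) * Real.log 2 := by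
  have h : ((125:ℝ)^16) ≤ 2^112 := by norm_num
  have h2 := Real.log_le_log (by positivity) h
  rw [Real.log_pow, Real.log_pow] at h2
  push_cast at h2
  linarith

lemma ub_126 : Real.log 126 ≤ (112/16 : ℝ) * Real.log 2 := by
  have h : ((126:ℝ)^16) ≤ 2^112 := by norm_num
  have h2 := Real.log_le_log (by positivity) h
  rw [Real.log_pow, Real.log_pow] at h2
  push_cast at h2
  linarith

lemma T_2 : T 2 = {2} := by decide
lemma card_2 : (T 2).card = 1 := by rw [T_2]; rfl
lemma th_2 : ((16:ℝ)/16) * Real.log 2 ≤ ∑ p ∈ T 2, Real.log p := by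
  rw [T_2, Finset.sum_singleton]
  push_cast
  linarith [lb_2]

lemma T_3 : T 3 = insert 3 (T 2) := by
  rw [show (3:ℕ) = 2+1 from rfl, T_succ_prime 2 (by norm_num)]
lemma card_3 : (T 3).card = 2 := by
  rw [T_3, Finset.card_insert_of_notMem (succ_not_mem_T 2), card_2]
lemma th_3 : ((41:ℝ)/16) * Real.log 2 ≤ ∑ p ∈ T 3, Real.log p := by
  rw [T_3, Finset.sum_insert (succ_not_mem_T 2)]
  push_cast
  linarith [lb_3, th_2]

lemma g_3 : G 3 := by
  unfold G
  rw [card_3]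
  push_cast
  norm_num
  linarith [th_3, ub_4, Real.log_pos (by norm_num : (1:ℝ) < 2)]

lemma T_4 : T 4 = T 3 := by
  rw [show (4:ℕ) = 3+1 from rfl, T_succ_comp 3 (by norm_num)]
lemma card_4 : (T 4).card = 2 := by rw [T_4]; exact card_3
lemma th_4 : ((41:ℝ)/16) * Real.log 2 ≤ ∑ p ∈ T 4, Real.log p := by
  rw [T_4]; exact th_3

lemma g_4 : G 4 := by
  unfold G
  rw [card_4]
  push_cast
  norm_num
  linarith [th_4, ub_5, Real.log_pos (by norm_num : (1:ℝ) < 2)]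

lemma T_5 : T 5 = insert 5 (T 4) := by
  rw [show (5:ℕ) = 4+1 from rfl, T_succ_prime 4 (by norm_num)]
lemma card_5 : (T 5).card = 3 := by
  rw [T_5, Finset.card_insert_of_notMem (succ_not_mem_T 4), card_4]
lemma th_5 : ((78:ℝ)/16) * Real.log 2 ≤ ∑ p ∈ T 5, Real.log p := by
  rw [T_5, Finset.sum_insert (succ_not_mem_T 4)]
  push_cast
  linarith [lb_5, th_4]

lemma g_5 : G 5 := by
  unfold G
  rw [card_5]
  push_cast
  norm_num
  linarith [th_5, ub_6, Real.log_pos (by norm_num : (1:ℝ) < 2)]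

lemma T_6 : T 6 = T 5 := by
  rw [show (6:ℕ) = 5+1 from rfl, T_succ_comp 5 (by norm_num)]
lemma card_6 : (T 6).card = 3 := by rw [T_6]; exact card_5
lemma th_6 : ((78:ℝ)/16) * Real.log 2 ≤ ∑ p ∈ T 6, Real.log p := by
  rw [T_6]; exact th_5

lemma g_6 : G 6 := by
  unfold G
  rw [card_6]
  push_cast
  norm_num
  linarith [th_6, ub_7, Real.log_pos (by norm_num : (1:ℝ) < 2)]

lemma T_7 : T 7 = insert 7 (T 6) := by
  rw [show (7:ℕ) = 6+1 from rfl, T_succ_prime 6 (by norm_num)]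
lemma card_7 : (T 7).card = 4 := by
  rw [T_7, Finset.card_insert_of_notMem (succ_not_mem_T 6), card_6]
lemma th_7 : ((122:ℝ)/16) * Real.log 2 ≤ ∑ p ∈ T 7, Real.log p := by
  rw [T_7, Finset.sum_insert (succ_not_mem_T 6)]
  push_cast
  linarith [lb_7, th_6]

lemma g_7 : G 7 := by
  unfold G
  rw [card_7]
  push_cast
  norm_num
  linarith [th_7, ub_8, Real.log_pos (by norm_num : (1:ℝ) < 2)]

lemma T_8 : T 8 = T 7 := by
  rw [show (8:ℕ) = 7+1 from rfl, T_succ_comp 7 (by norm_num)]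
lemma card_8 : (T 8).card = 4 := by rw [T_8]; exact card_7
lemma th_8 : ((122:ℝ)/16) * Real.log 2 ≤ ∑ p ∈ T 8, Real.log p := by
  rw [T_8]; exact th_7

lemma g_8 : G 8 := by
  unfold G
  rw [card_8]
  push_cast
  norm_num
  linarith [th_8, ub_9, Real.log_pos (by norm_num : (1:ℝ) < 2)]

lemma T_9 : T 9 = T 8 := by
  rw [show (9:ℕ) = 8+1 from rfl, T_succ_comp 8 (by norm_num)]
lemma card_9 : (T 9).card = 4 := by rw [T_9]; exact card_8
lemma th_9 : ((122:ℝ)/16) * Real.log 2 ≤ ∑ p ∈ T 9, Real.log p := by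
  rw [T_9]; exact th_8

lemma g_9 : G 9 := by
  unfold G
  rw [card_9]
  push_cast
  norm_num
  linarith [th_9, ub_10, Real.log_pos (by norm_num : (1:ℝ) < 2)]

lemma T_10 : T 10 = T 9 := by
  rw [show (10:ℕ) = 9+1 from rfl, T_succ_comp 9 (by norm_num)]
lemma card_10 : (T 10).card = 4 := by rw [T_10]; exact card_9
lemma th_10 : ((122:ℝ)/16) * Real.log 2 ≤ ∑ p ∈ T 10, Real.log p := by
  rw [T_10]; exact th_9

lemma g_10 : G 10 := by
  unfold G
  rw [card_10]
  push_cast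
  norm_num
  linarith [th_10, ub_11, Real.log_pos (by norm_num : (1:ℝ) < 2)]

lemma T_11 : T 11 = insert 11 (T 10) := by
  rw [show (11:ℕ) = 10+1 from rfl, T_succ_prime 10 (by norm_num)]
lemma card_11 : (T 11).card = 5 := by
  rw [T_11, Finset.card_insert_of_notMem (succ_not_mem_T 10), card_10]
lemma th_11 : ((177:ℝ)/16) * Real.log 2 ≤ ∑ p ∈ T 11, Real.log p := by
  rw [T_11, Finset.sum_insert (succ_not_mem_T 10)]
  push_cast
  linarith [lb_11, th_10]

lemma g_11 : G 11 := by
  unfold G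
  rw [card_11]
  push_cast
  norm_num
  linarith [th_11, ub_12, Real.log_pos (by norm_num : (1:ℝ) < 2)]

lemma T_12 : T 12 = T 11 := by
  rw [show (12:ℕ) = 11+1 from rfl, T_succ_comp 11 (by norm_num)]
lemma card_12 : (T 12).card = 5 := by rw [T_12]; exact card_11
lemma th_12 : ((177:ℝ)/16) * Real.log 2 ≤ ∑ p ∈ T 12, Real.log p := by
  rw [T_12]; exact th_11

lemma g_12 : G 12 := by
  unfold G
  rw [card_12]
  push_cast
  norm_num
  linarith [th_12, ub_13, Real.log_pos (by norm_num : (1:ℝ) < 2)]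

lemma T_13 : T 13 = insert 13 (T 12) := by
  rw [show (13:ℕ) = 12+1 from rfl, T_succ_prime 12 (by norm_num)]
lemma card_13 : (T 13).card = 6 := by
  rw [T_13, Finset.card_insert_of_notMem (succ_not_mem_T 12), card_12]
lemma th_13 : ((236:ℝ)/16) * Real.log 2 ≤ ∑ p ∈ T 13, Real.log p := by
  rw [T_13, Finset.sum_insert (succ_not_mem_T 12)]
  push_cast
  linarith [lb_13, th_12]

lemma g_13 : G 13 := by
  unfold G
  rw [card_13]
  push_cast
  norm_num
  linarith [th_13, ub_14, Real.log_pos (by norm_num : (1:ℝ) < 2)]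

lemma T_14 : T 14 = T 13 := by
  rw [show (14:ℕ) = 13+1 from rfl, T_succ_comp 13 (by norm_num)]
lemma card_14 : (T 14).card = 6 := by rw [T_14]; exact card_13
lemma th_14 : ((236:ℝ)/16) * Real.log 2 ≤ ∑ p ∈ T 14, Real.log p := by
  rw [T_14]; exact th_13

lemma g_14 : G 14 := by
  unfold G
  rw [card_14]
  push_cast
  norm_num
  linarith [th_14, ub_15, Real.log_pos (by norm_num : (1:ℝ) < 2)]

lemma T_15 : T 15 = T 14 := by
  rw [show (15:ℕ) = 14+1 from rfl, T_succ_comp 14 (by norm_num)]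
lemma card_15 : (T 15).card = 6 := by rw [T_15]; exact card_14
lemma th_15 : ((236:ℝ)/16) * Real.log 2 ≤ ∑ p ∈ T 15, Real.log p := by
  rw [T_15]; exact th_14

lemma g_15 : G 15 := by
  unfold G
  rw [card_15]
  push_cast
  norm_num
  linarith [th_15, ub_16, Real.log_pos (by norm_num : (1:ℝ) < 2)]

lemma T_16 : T 16 = T 15 := by
  rw [show (16:ℕ) = 15+1 from rfl, T_succ_comp 15 (by norm_num)]
lemma card_16 : (T 16).card = 6 := by rw [T_16]; exact card_15
lemma th_16 : ((236:ℝ)/16) * Real.log 2 ≤ ∑ p ∈ T 16, Real.log p := by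
  rw [T_16]; exact th_15

lemma g_16 : G 16 := by
  unfold G
  rw [card_16]
  push_cast
  norm_num
  linarith [th_16, ub_17, Real.log_pos (by norm_num : (1:ℝ) < 2)]

lemma T_17 : T 17 = insert 17 (T 16) := by
  rw [show (17:ℕ) = 16+1 from rfl, T_succ_prime 16 (by norm_num)]
lemma card_17 : (T 17).card = 7 := by
  rw [T_17, Finset.card_insert_of_notMem (succ_not_mem_T 16), card_16]
lemma th_17 : ((301:ℝ)/16) * Real.log 2 ≤ ∑ p ∈ T 17, Real.log p := by
  rw [T_17, Finset.sum_insert (succ_not_mem_T 16)]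
  push_cast
  linarith [lb_17, th_16]

lemma g_17 : G 17 := by
  unfold G
  rw [card_17]
  push_cast
  norm_num
  linarith [th_17, ub_18, Real.log_pos (by norm_num : (1:ℝ) < 2)]

lemma T_18 : T 18 = T 17 := by
  rw [show (18:ℕ) = 17+1 from rfl, T_succ_comp 17 (by norm_num)]
lemma card_18 : (T 18).card = 7 := by rw [T_18]; exact card_17
lemma th_18 : ((301:ℝ)/16) * Real.log 2 ≤ ∑ p ∈ T 18, Real.log p := by
  rw [T_18]; exact th_17

lemma g_18 : G 18 := by
  unfold G
  rw [card_18]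
  push_cast
  norm_num
  linarith [th_18, ub_19, Real.log_pos (by norm_num : (1:ℝ) < 2)]

lemma T_19 : T 19 = insert 19 (T 18) := by
  rw [show (19:ℕ) = 18+1 from rfl, T_succ_prime 18 (by norm_num)]
lemma card_19 : (T 19).card = 8 := by
  rw [T_19, Finset.card_insert_of_notMem (succ_not_mem_T 18), card_18]
lemma th_19 : ((368:ℝ)/16) * Real.log 2 ≤ ∑ p ∈ T 19, Real.log p := by
  rw [T_19, Finset.sum_insert (succ_not_mem_T 18)]
  push_cast
  linarith [lb_19, th_18]

lemma g_19 : G 19 := by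
  unfold G
  rw [card_19]
  push_cast
  norm_num
  linarith [th_19, ub_20, Real.log_pos (by norm_num : (1:ℝ) < 2)]

lemma T_20 : T 20 = T 19 := by
  rw [show (20:ℕ) = 19+1 from rfl, T_succ_comp 19 (by norm_num)]
lemma card_20 : (T 20).card = 8 := by rw [T_20]; exact card_19
lemma th_20 : ((368:ℝ)/16) * Real.log 2 ≤ ∑ p ∈ T 20, Real.log p := by
  rw [T_20]; exact th_19

lemma g_20 : G 20 := by
  unfold G
  rw [card_20]
  push_cast
  norm_num
  linarith [th_20, ub_21, Real.log_pos (by norm_num : (1:ℝ) < 2)]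

lemma T_21 : T 21 = T 20 := by
  rw [show (21:ℕ) = 20+1 from rfl, T_succ_comp 20 (by norm_num)]
lemma card_21 : (T 21).card = 8 := by rw [T_21]; exact card_20
lemma th_21 : ((368:ℝ)/16) * Real.log 2 ≤ ∑ p ∈ T 21, Real.log p := by
  rw [T_21]; exact th_20

lemma g_21 : G 21 := by
  unfold G
  rw [card_21]
  push_cast
  norm_num
  linarith [th_21, ub_22, Real.log_pos (by norm_num : (1:ℝ) < 2)]

lemma T_22 : T 22 = T 21 := by
  rw [show (22:ℕ) = 21+1 from rfl, T_succ_comp 21 (by norm_num)]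
lemma card_22 : (T 22).card = 8 := by rw [T_22]; exact card_21
lemma th_22 : ((368:ℝ)/16) * Real.log 2 ≤ ∑ p ∈ T 22, Real.log p := by
  rw [T_22]; exact th_21

lemma g_22 : G 22 := by
  unfold G
  rw [card_22]
  push_cast
  norm_num
  linarith [th_22, ub_23, Real.log_pos (by norm_num : (1:ℝ) < 2)]

lemma T_23 : T 23 = insert 23 (T 22) := by
  rw [show (23:ℕ) = 22+1 from rfl, T_succ_prime 22 (by norm_num)]
lemma card_23 : (T 23).card = 9 := by
  rw [T_23, Finset.card_insert_of_notMem (succ_not_mem_T 22), card_22]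
lemma th_23 : ((440:ℝ)/16) * Real.log 2 ≤ ∑ p ∈ T 23, Real.log p := by
  rw [T_23, Finset.sum_insert (succ_not_mem_T 22)]
  push_cast
  linarith [lb_23, th_22]

lemma g_23 : G 23 := by
  unfold G
  rw [card_23]
  push_cast
  norm_num
  linarith [th_23, ub_24, Real.log_pos (by norm_num : (1:ℝ) < 2)]

lemma T_24 : T 24 = T 23 := by
  rw [show (24:ℕ) = 23+1 from rfl, T_succ_comp 23 (by norm_num)]
lemma card_24 : (T 24).card = 9 := by rw [T_24]; exact card_23
lemma th_24 : ((440:ℝ)/16) * Real.log 2 ≤ ∑ p ∈ T 24, Real.log p := by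
  rw [T_24]; exact th_23

lemma g_24 : G 24 := by
  unfold G
  rw [card_24]
  push_cast
  norm_num
  linarith [th_24, ub_25, Real.log_pos (by norm_num : (1:ℝ) < 2)]

lemma T_25 : T 25 = T 24 := by
  rw [show (25:ℕ) = 24+1 from rfl, T_succ_comp 24 (by norm_num)]
lemma card_25 : (T 25).card = 9 := by rw [T_25]; exact card_24
lemma th_25 : ((440:ℝ)/16) * Real.log 2 ≤ ∑ p ∈ T 25, Real.log p := by
  rw [T_25]; exact th_24

lemma g_25 : G 25 := by
  unfold G
  rw [card_25]
  push_cast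
  norm_num
  linarith [th_25, ub_26, Real.log_pos (by norm_num : (1:ℝ) < 2)]

lemma T_26 : T 26 = T 25 := by
  rw [show (26:ℕ) = 25+1 from rfl, T_succ_comp 25 (by norm_num)]
lemma card_26 : (T 26).card = 9 := by rw [T_26]; exact card_25
lemma th_26 : ((440:ℝ)/16) * Real.log 2 ≤ ∑ p ∈ T 26, Real.log p := by
  rw [T_26]; exact th_25

lemma g_26 : G 26 := by
  unfold G
  rw [card_26]
  push_cast
  norm_num
  linarith [th_26, ub_27, Real.log_pos (by norm_num : (1:ℝ) < 2)]

lemma T_27 : T 27 = T 26 := by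
  rw [show (27:ℕ) = 26+1 from rfl, T_succ_comp 26 (by norm_num)]
lemma card_27 : (T 27).card = 9 := by rw [T_27]; exact card_26
lemma th_27 : ((440:ℝ)/16) * Real.log 2 ≤ ∑ p ∈ T 27, Real.log p := by
  rw [T_27]; exact th_26

lemma g_27 : G 27 := by
  unfold G
  rw [card_27]
  push_cast
  norm_num
  linarith [th_27, ub_28, Real.log_pos (by norm_num : (1:ℝ) < 2)]

lemma T_28 : T 28 = T 27 := by
  rw [show (28:ℕ) = 27+1 from rfl, T_succ_comp 27 (by norm_num)]
lemma card_28 : (T 28).card = 9 := by rw [T_28]; exact card_27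
lemma th_28 : ((440:ℝ)/16) * Real.log 2 ≤ ∑ p ∈ T 28, Real.log p := by
  rw [T_28]; exact th_27

lemma g_28 : G 28 := by
  unfold G
  rw [card_28]
  push_cast
  norm_num
  linarith [th_28, ub_29, Real.log_pos (by norm_num : (1:ℝ) < 2)]

lemma T_29 : T 29 = insert 29 (T 28) := by
  rw [show (29:ℕ) = 28+1 from rfl, T_succ_prime 28 (by norm_num)]
lemma card_29 : (T 29).card = 10 := by
  rw [T_29, Finset.card_insert_of_notMem (succ_not_mem_T 28), card_28]
lemma th_29 : ((517:ℝ)/16) * Real.log 2 ≤ ∑ p ∈ T 29, Real.log p := by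
  rw [T_29, Finset.sum_insert (succ_not_mem_T 28)]
  push_cast
  linarith [lb_29, th_28]

lemma g_29 : G 29 := by
  unfold G
  rw [card_29]
  push_cast
  norm_num
  linarith [th_29, ub_30, Real.log_pos (by norm_num : (1:ℝ) < 2)]

lemma T_30 : T 30 = T 29 := by
  rw [show (30:ℕ) = 29+1 from rfl, T_succ_comp 29 (by norm_num)]
lemma card_30 : (T 30).card = 10 := by rw [T_30]; exact card_29
lemma th_30 : ((517:ℝ)/16) * Real.log 2 ≤ ∑ p ∈ T 30, Real.log p := by
  rw [T_30]; exact th_29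

lemma g_30 : G 30 := by
  unfold G
  rw [card_30]
  push_cast
  norm_num
  linarith [th_30, ub_31, Real.log_pos (by norm_num : (1:ℝ) < 2)]

lemma T_31 : T 31 = insert 31 (T 30) := by
  rw [show (31:ℕ) = 30+1 from rfl, T_succ_prime 30 (by norm_num)]
lemma card_31 : (T 31).card = 11 := by
  rw [T_31, Finset.card_insert_of_notMem (succ_not_mem_T 30), card_30]
lemma th_31 : ((596:ℝ)/16) * Real.log 2 ≤ ∑ p ∈ T 31, Real.log p := by
  rw [T_31, Finset.sum_insert (succ_not_mem_T 30)]
  push_cast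
  linarith [lb_31, th_30]

lemma g_31 : G 31 := by
  unfold G
  rw [card_31]
  push_cast
  norm_num
  linarith [th_31, ub_32, Real.log_pos (by norm_num : (1:ℝ) < 2)]

lemma T_32 : T 32 = T 31 := by
  rw [show (32:ℕ) = 31+1 from rfl, T_succ_comp 31 (by norm_num)]
lemma card_32 : (T 32).card = 11 := by rw [T_32]; exact card_31
lemma th_32 : ((596:ℝ)/16) * Real.log 2 ≤ ∑ p ∈ T 32, Real.log p := by
  rw [T_32]; exact th_31

lemma g_32 : G 32 := by
  unfold G
  rw [card_32]
  push_cast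
  norm_num
  linarith [th_32, ub_33, Real.log_pos (by norm_num : (1:ℝ) < 2)]

lemma T_33 : T 33 = T 32 := by
  rw [show (33:ℕ) = 32+1 from rfl, T_succ_comp 32 (by norm_num)]
lemma card_33 : (T 33).card = 11 := by rw [T_33]; exact card_32
lemma th_33 : ((596:ℝ)/16) * Real.log 2 ≤ ∑ p ∈ T 33, Real.log p := by
  rw [T_33]; exact th_32

lemma g_33 : G 33 := by
  unfold G
  rw [card_33]
  push_cast
  norm_num
  linarith [th_33, ub_34, Real.log_pos (by norm_num : (1:ℝ) < 2)]

lemma T_34 : T 34 = T 33 := by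
  rw [show (34:ℕ) = 33+1 from rfl, T_succ_comp 33 (by norm_num)]
lemma card_34 : (T 34).card = 11 := by rw [T_34]; exact card_33
lemma th_34 : ((596:ℝ)/16) * Real.log 2 ≤ ∑ p ∈ T 34, Real.log p := by
  rw [T_34]; exact th_33

lemma g_34 : G 34 := by
  unfold G
  rw [card_34]
  push_cast
  norm_num
  linarith [th_34, ub_35, Real.log_pos (by norm_num : (1:ℝ) < 2)]

lemma T_35 : T 35 = T 34 := by
  rw [show (35:ℕ) = 34+1 from rfl, T_succ_comp 34 (by norm_num)]
lemma card_35 : (T 35).card = 11 := by rw [T_35]; exact card_34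
lemma th_35 : ((596:ℝ)/16) * Real.log 2 ≤ ∑ p ∈ T 35, Real.log p := by
  rw [T_35]; exact th_34

lemma g_35 : G 35 := by
  unfold G
  rw [card_35]
  push_cast
  norm_num
  linarith [th_35, ub_36, Real.log_pos (by norm_num : (1:ℝ) < 2)]

lemma T_36 : T 36 = T 35 := by
  rw [show (36:ℕ) = 35+1 from rfl, T_succ_comp 35 (by norm_num)]
lemma card_36 : (T 36).card = 11 := by rw [T_36]; exact card_35
lemma th_36 : ((596:ℝ)/16) * Real.log 2 ≤ ∑ p ∈ T 36, Real.log p := by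
  rw [T_36]; exact th_35

lemma g_36 : G 36 := by
  unfold G
  rw [card_36]
  push_cast
  norm_num
  linarith [th_36, ub_37, Real.log_pos (by norm_num : (1:ℝ) < 2)]

lemma T_37 : T 37 = insert 37 (T 36) := by
  rw [show (37:ℕ) = 36+1 from rfl, T_succ_prime 36 (by norm_num)]
lemma card_37 : (T 37).card = 12 := by
  rw [T_37, Finset.card_insert_of_notMem (succ_not_mem_T 36), card_36]
lemma th_37 : ((679:ℝ)/16) * Real.log 2 ≤ ∑ p ∈ T 37, Real.log p := by
  rw [T_37, Finset.sum_insert (succ_not_mem_T 36)]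
  push_cast
  linarith [lb_37, th_36]

lemma g_37 : G 37 := by
  unfold G
  rw [card_37]
  push_cast
  norm_num
  linarith [th_37, ub_38, Real.log_pos (by norm_num : (1:ℝ) < 2)]

lemma T_38 : T 38 = T 37 := by
  rw [show (38:ℕ) = 37+1 from rfl, T_succ_comp 37 (by norm_num)]
lemma card_38 : (T 38).card = 12 := by rw [T_38]; exact card_37
lemma th_38 : ((679:ℝ)/16) * Real.log 2 ≤ ∑ p ∈ T 38, Real.log p := by
  rw [T_38]; exact th_37

lemma g_38 : G 38 := by
  unfold G
  rw [card_38]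
  push_cast
  norm_num
  linarith [th_38, ub_39, Real.log_pos (by norm_num : (1:ℝ) < 2)]

lemma T_39 : T 39 = T 38 := by
  rw [show (39:ℕ) = 38+1 from rfl, T_succ_comp 38 (by norm_num)]
lemma card_39 : (T 39).card = 12 := by rw [T_39]; exact card_38
lemma th_39 : ((679:ℝ)/16) * Real.log 2 ≤ ∑ p ∈ T 39, Real.log p := by
  rw [T_39]; exact th_38

lemma g_39 : G 39 := by
  unfold G
  rw [card_39]
  push_cast
  norm_num
  linarith [th_39, ub_40, Real.log_pos (by norm_num : (1:ℝ) < 2)]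

lemma T_40 : T 40 = T 39 := by
  rw [show (40:ℕ) = 39+1 from rfl, T_succ_comp 39 (by norm_num)]
lemma card_40 : (T 40).card = 12 := by rw [T_40]; exact card_39
lemma th_40 : ((679:ℝ)/16) * Real.log 2 ≤ ∑ p ∈ T 40, Real.log p := by
  rw [T_40]; exact th_39

lemma g_40 : G 40 := by
  unfold G
  rw [card_40]
  push_cast
  norm_num
  linarith [th_40, ub_41, Real.log_pos (by norm_num : (1:ℝ) < 2)]

lemma T_41 : T 41 = insert 41 (T 40) := by
  rw [show (41:ℕ) = 40+1 from rfl, T_succ_prime 40 (by norm_num)]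
lemma card_41 : (T 41).card = 13 := by
  rw [T_41, Finset.card_insert_of_notMem (succ_not_mem_T 40), card_40]
lemma th_41 : ((764:ℝ)/16) * Real.log 2 ≤ ∑ p ∈ T 41, Real.log p := by
  rw [T_41, Finset.sum_insert (succ_not_mem_T 40)]
  push_cast
  linarith [lb_41, th_40]

lemma g_41 : G 41 := by
  unfold G
  rw [card_41]
  push_cast
  norm_num
  linarith [th_41, ub_42, Real.log_pos (by norm_num : (1:ℝ) < 2)]

lemma T_42 : T 42 = T 41 := by
  rw [show (42:ℕ) = 41+1 from rfl, T_succ_comp 41 (by norm_num)]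
lemma card_42 : (T 42).card = 13 := by rw [T_42]; exact card_41
lemma th_42 : ((764:ℝ)/16) * Real.log 2 ≤ ∑ p ∈ T 42, Real.log p := by
  rw [T_42]; exact th_41

lemma g_42 : G 42 := by
  unfold G
  rw [card_42]
  push_cast
  norm_num
  linarith [th_42, ub_43, Real.log_pos (by norm_num : (1:ℝ) < 2)]

lemma T_43 : T 43 = insert 43 (T 42) := by
  rw [show (43:ℕ) = 42+1 from rfl, T_succ_prime 42 (by norm_num)]
lemma card_43 : (T 43).card = 14 := by
  rw [T_43, Finset.card_insert_of_notMem (succ_not_mem_T 42), card_42]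
lemma th_43 : ((850:ℝ)/16) * Real.log 2 ≤ ∑ p ∈ T 43, Real.log p := by
  rw [T_43, Finset.sum_insert (succ_not_mem_T 42)]
  push_cast
  linarith [lb_43, th_42]

lemma g_43 : G 43 := by
  unfold G
  rw [card_43]
  push_cast
  norm_num
  linarith [th_43, ub_44, Real.log_pos (by norm_num : (1:ℝ) < 2)]

lemma T_44 : T 44 = T 43 := by
  rw [show (44:ℕ) = 43+1 from rfl, T_succ_comp 43 (by norm_num)]
lemma card_44 : (T 44).card = 14 := by rw [T_44]; exact card_43
lemma th_44 : ((850:ℝ)/16) * Real.log 2 ≤ ∑ p ∈ T 44, Real.log p := by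
  rw [T_44]; exact th_43

lemma g_44 : G 44 := by
  unfold G
  rw [card_44]
  push_cast
  norm_num
  linarith [th_44, ub_45, Real.log_pos (by norm_num : (1:ℝ) < 2)]

lemma T_45 : T 45 = T 44 := by
  rw [show (45:ℕ) = 44+1 from rfl, T_succ_comp 44 (by norm_num)]
lemma card_45 : (T 45).card = 14 := by rw [T_45]; exact card_44
lemma th_45 : ((850:ℝ)/16) * Real.log 2 ≤ ∑ p ∈ T 45, Real.log p := by
  rw [T_45]; exact th_44

lemma g_45 : G 45 := by
  unfold G
  rw [card_45]
  push_cast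
  norm_num
  linarith [th_45, ub_46, Real.log_pos (by norm_num : (1:ℝ) < 2)]

lemma T_46 : T 46 = T 45 := by
  rw [show (46:ℕ) = 45+1 from rfl, T_succ_comp 45 (by norm_num)]
lemma card_46 : (T 46).card = 14 := by rw [T_46]; exact card_45
lemma th_46 : ((850:ℝ)/16) * Real.log 2 ≤ ∑ p ∈ T 46, Real.log p := by
  rw [T_46]; exact th_45

lemma g_46 : G 46 := by
  unfold G
  rw [card_46]
  push_cast
  norm_num
  linarith [th_46, ub_47, Real.log_pos (by norm_num : (1:ℝ) < 2)]

lemma T_47 : T 47 = insert 47 (T 46) := by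
  rw [show (47:ℕ) = 46+1 from rfl, T_succ_prime 46 (by norm_num)]
lemma card_47 : (T 47).card = 15 := by
  rw [T_47, Finset.card_insert_of_notMem (succ_not_mem_T 46), card_46]
lemma th_47 : ((938:ℝ)/16) * Real.log 2 ≤ ∑ p ∈ T 47, Real.log p := by
  rw [T_47, Finset.sum_insert (succ_not_mem_T 46)]
  push_cast
  linarith [lb_47, th_46]

lemma g_47 : G 47 := by
  unfold G
  rw [card_47]
  push_cast
  norm_num
  linarith [th_47, ub_48, Real.log_pos (by norm_num : (1:ℝ) < 2)]

lemma T_48 : T 48 = T 47 := by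
  rw [show (48:ℕ) = 47+1 from rfl, T_succ_comp 47 (by norm_num)]
lemma card_48 : (T 48).card = 15 := by rw [T_48]; exact card_47
lemma th_48 : ((938:ℝ)/16) * Real.log 2 ≤ ∑ p ∈ T 48, Real.log p := by
  rw [T_48]; exact th_47

lemma g_48 : G 48 := by
  unfold G
  rw [card_48]
  push_cast
  norm_num
  linarith [th_48, ub_49, Real.log_pos (by norm_num : (1:ℝ) < 2)]

lemma T_49 : T 49 = T 48 := by
  rw [show (49:ℕ) = 48+1 from rfl, T_succ_comp 48 (by norm_num)]
lemma card_49 : (T 49).card = 15 := by rw [T_49]; exact card_48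
lemma th_49 : ((938:ℝ)/16) * Real.log 2 ≤ ∑ p ∈ T 49, Real.log p := by
  rw [T_49]; exact th_48

lemma g_49 : G 49 := by
  unfold G
  rw [card_49]
  push_cast
  norm_num
  linarith [th_49, ub_50, Real.log_pos (by norm_num : (1:ℝ) < 2)]

lemma T_50 : T 50 = T 49 := by
  rw [show (50:ℕ) = 49+1 from rfl, T_succ_comp 49 (by norm_num)]
lemma card_50 : (T 50).card = 15 := by rw [T_50]; exact card_49
lemma th_50 : ((938:ℝ)/16) * Real.log 2 ≤ ∑ p ∈ T 50, Real.log p := by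
  rw [T_50]; exact th_49

lemma g_50 : G 50 := by
  unfold G
  rw [card_50]
  push_cast
  norm_num
  linarith [th_50, ub_51, Real.log_pos (by norm_num : (1:ℝ) < 2)]

lemma T_51 : T 51 = T 50 := by
  rw [show (51:ℕ) = 50+1 from rfl, T_succ_comp 50 (by norm_num)]
lemma card_51 : (T 51).card = 15 := by rw [T_51]; exact card_50
lemma th_51 : ((938:ℝ)/16) * Real.log 2 ≤ ∑ p ∈ T 51, Real.log p := by
  rw [T_51]; exact th_50

lemma g_51 : G 51 := by
  unfold G
  rw [card_51]
  push_cast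
  norm_num
  linarith [th_51, ub_52, Real.log_pos (by norm_num : (1:ℝ) < 2)]

lemma T_52 : T 52 = T 51 := by
  rw [show (52:ℕ) = 51+1 from rfl, T_succ_comp 51 (by norm_num)]
lemma card_52 : (T 52).card = 15 := by rw [T_52]; exact card_51
lemma th_52 : ((938:ℝ)/16) * Real.log 2 ≤ ∑ p ∈ T 52, Real.log p := by
  rw [T_52]; exact th_51

lemma g_52 : G 52 := by
  unfold G
  rw [card_52]
  push_cast
  norm_num
  linarith [th_52, ub_53, Real.log_pos (by norm_num : (1:ℝ) < 2)]

lemma T_53 : T 53 = insert 53 (T 52) := by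
  rw [show (53:ℕ) = 52+1 from rfl, T_succ_prime 52 (by norm_num)]
lemma card_53 : (T 53).card = 16 := by
  rw [T_53, Finset.card_insert_of_notMem (succ_not_mem_T 52), card_52]
lemma th_53 : ((1029:ℝ)/16) * Real.log 2 ≤ ∑ p ∈ T 53, Real.log p := by
  rw [T_53, Finset.sum_insert (succ_not_mem_T 52)]
  push_cast
  linarith [lb_53, th_52]

lemma g_53 : G 53 := by
  unfold G
  rw [card_53]
  push_cast
  norm_num
  linarith [th_53, ub_54, Real.log_pos (by norm_num : (1:ℝ) < 2)]

lemma T_54 : T 54 = T 53 := by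
  rw [show (54:ℕ) = 53+1 from rfl, T_succ_comp 53 (by norm_num)]
lemma card_54 : (T 54).card = 16 := by rw [T_54]; exact card_53
lemma th_54 : ((1029:ℝ)/16) * Real.log 2 ≤ ∑ p ∈ T 54, Real.log p := by
  rw [T_54]; exact th_53

lemma g_54 : G 54 := by
  unfold G
  rw [card_54]
  push_cast
  norm_num
  linarith [th_54, ub_55, Real.log_pos (by norm_num : (1:ℝ) < 2)]

lemma T_55 : T 55 = T 54 := by
  rw [show (55:ℕ) = 54+1 from rfl, T_succ_comp 54 (by norm_num)]
lemma card_55 : (T 55).card = 16 := by rw [T_55]; exact card_54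
lemma th_55 : ((1029:ℝ)/16) * Real.log 2 ≤ ∑ p ∈ T 55, Real.log p := by
  rw [T_55]; exact th_54

lemma g_55 : G 55 := by
  unfold G
  rw [card_55]
  push_cast
  norm_num
  linarith [th_55, ub_56, Real.log_pos (by norm_num : (1:ℝ) < 2)]

lemma T_56 : T 56 = T 55 := by
  rw [show (56:ℕ) = 55+1 from rfl, T_succ_comp 55 (by norm_num)]
lemma card_56 : (T 56).card = 16 := by rw [T_56]; exact card_55
lemma th_56 : ((1029:ℝ)/16) * Real.log 2 ≤ ∑ p ∈ T 56, Real.log p := by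
  rw [T_56]; exact th_55

lemma g_56 : G 56 := by
  unfold G
  rw [card_56]
  push_cast
  norm_num
  linarith [th_56, ub_57, Real.log_pos (by norm_num : (1:ℝ) < 2)]

lemma T_57 : T 57 = T 56 := by
  rw [show (57:ℕ) = 56+1 from rfl, T_succ_comp 56 (by norm_num)]
lemma card_57 : (T 57).card = 16 := by rw [T_57]; exact card_56
lemma th_57 : ((1029:ℝ)/16) * Real.log 2 ≤ ∑ p ∈ T 57, Real.log p := by
  rw [T_57]; exact th_56

lemma g_57 : G 57 := by
  unfold G
  rw [card_57]
  push_cast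
  norm_num
  linarith [th_57, ub_58, Real.log_pos (by norm_num : (1:ℝ) < 2)]

lemma T_58 : T 58 = T 57 := by
  rw [show (58:ℕ) = 57+1 from rfl, T_succ_comp 57 (by norm_num)]
lemma card_58 : (T 58).card = 16 := by rw [T_58]; exact card_57
lemma th_58 : ((1029:ℝ)/16) * Real.log 2 ≤ ∑ p ∈ T 58, Real.log p := by
  rw [T_58]; exact th_57

lemma g_58 : G 58 := by
  unfold G
  rw [card_58]
  push_cast
  norm_num
  linarith [th_58, ub_59, Real.log_pos (by norm_num : (1:ℝ) < 2)]

lemma T_59 : T 59 = insert 59 (T 58) := by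
  rw [show (59:ℕ) = 58+1 from rfl, T_succ_prime 58 (by norm_num)]
lemma card_59 : (T 59).card = 17 := by
  rw [T_59, Finset.card_insert_of_notMem (succ_not_mem_T 58), card_58]
lemma th_59 : ((1123:ℝ)/16) * Real.log 2 ≤ ∑ p ∈ T 59, Real.log p := by
  rw [T_59, Finset.sum_insert (succ_not_mem_T 58)]
  push_cast
  linarith [lb_59, th_58]

lemma g_59 : G 59 := by
  unfold G
  rw [card_59]
  push_cast
  norm_num
  linarith [th_59, ub_60, Real.log_pos (by norm_num : (1:ℝ) < 2)]

lemma T_60 : T 60 = T 59 := by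
  rw [show (60:ℕ) = 59+1 from rfl, T_succ_comp 59 (by norm_num)]
lemma card_60 : (T 60).card = 17 := by rw [T_60]; exact card_59
lemma th_60 : ((1123:ℝ)/16) * Real.log 2 ≤ ∑ p ∈ T 60, Real.log p := by
  rw [T_60]; exact th_59

lemma g_60 : G 60 := by
  unfold G
  rw [card_60]
  push_cast
  norm_num
  linarith [th_60, ub_61, Real.log_pos (by norm_num : (1:ℝ) < 2)]

lemma T_61 : T 61 = insert 61 (T 60) := by
  rw [show (61:ℕ) = 60+1 from rfl, T_succ_prime 60 (by norm_num)]
lemma card_61 : (T 61).card = 18 := by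
  rw [T_61, Finset.card_insert_of_notMem (succ_not_mem_T 60), card_60]
lemma th_61 : ((1217:ℝ)/16) * Real.log 2 ≤ ∑ p ∈ T 61, Real.log p := by
  rw [T_61, Finset.sum_insert (succ_not_mem_T 60)]
  push_cast
  linarith [lb_61, th_60]

lemma g_61 : G 61 := by
  unfold G
  rw [card_61]
  push_cast
  norm_num
  linarith [th_61, ub_62, Real.log_pos (by norm_num : (1:ℝ) < 2)]

lemma T_62 : T 62 = T 61 := by
  rw [show (62:ℕ) = 61+1 from rfl, T_succ_comp 61 (by norm_num)]
lemma card_62 : (T 62).card = 18 := by rw [T_62]; exact card_61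
lemma th_62 : ((1217:ℝ)/16) * Real.log 2 ≤ ∑ p ∈ T 62, Real.log p := by
  rw [T_62]; exact th_61

lemma g_62 : G 62 := by
  unfold G
  rw [card_62]
  push_cast
  norm_num
  linarith [th_62, ub_63, Real.log_pos (by norm_num : (1:ℝ) < 2)]

lemma T_63 : T 63 = T 62 := by
  rw [show (63:ℕ) = 62+1 from rfl, T_succ_comp 62 (by norm_num)]
lemma card_63 : (T 63).card = 18 := by rw [T_63]; exact card_62
lemma th_63 : ((1217:ℝ)/16) * Real.log 2 ≤ ∑ p ∈ T 63, Real.log p := by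
  rw [T_63]; exact th_62

lemma g_63 : G 63 := by
  unfold G
  rw [card_63]
  push_cast
  norm_num
  linarith [th_63, ub_64, Real.log_pos (by norm_num : (1:ℝ) < 2)]

lemma T_64 : T 64 = T 63 := by
  rw [show (64:ℕ) = 63+1 from rfl, T_succ_comp 63 (by norm_num)]
lemma card_64 : (T 64).card = 18 := by rw [T_64]; exact card_63
lemma th_64 : ((1217:ℝ)/16) * Real.log 2 ≤ ∑ p ∈ T 64, Real.log p := by
  rw [T_64]; exact th_63

lemma g_64 : G 64 := by
  unfold G
  rw [card_64]
  push_cast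
  norm_num
  linarith [th_64, ub_65, Real.log_pos (by norm_num : (1:ℝ) < 2)]

lemma T_65 : T 65 = T 64 := by
  rw [show (65:ℕ) = 64+1 from rfl, T_succ_comp 64 (by norm_num)]
lemma card_65 : (T 65).card = 18 := by rw [T_65]; exact card_64
lemma th_65 : ((1217:ℝ)/16) * Real.log 2 ≤ ∑ p ∈ T 65, Real.log p := by
  rw [T_65]; exact th_64

lemma g_65 : G 65 := by
  unfold G
  rw [card_65]
  push_cast
  norm_num
  linarith [th_65, ub_66, Real.log_pos (by norm_num : (1:ℝ) < 2)]

lemma T_66 : T 66 = T 65 := by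
  rw [show (66:ℕ) = 65+1 from rfl, T_succ_comp 65 (by norm_num)]
lemma card_66 : (T 66).card = 18 := by rw [T_66]; exact card_65
lemma th_66 : ((1217:ℝ)/16) * Real.log 2 ≤ ∑ p ∈ T 66, Real.log p := by
  rw [T_66]; exact th_65

lemma g_66 : G 66 := by
  unfold G
  rw [card_66]
  push_cast
  norm_num
  linarith [th_66, ub_67, Real.log_pos (by norm_num : (1:ℝ) < 2)]

lemma T_67 : T 67 = insert 67 (T 66) := by
  rw [show (67:ℕ) = 66+1 from rfl, T_succ_prime 66 (by norm_num)]
lemma card_67 : (T 67).card = 19 := by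
  rw [T_67, Finset.card_insert_of_notMem (succ_not_mem_T 66), card_66]
lemma th_67 : ((1314:ℝ)/16) * Real.log 2 ≤ ∑ p ∈ T 67, Real.log p := by
  rw [T_67, Finset.sum_insert (succ_not_mem_T 66)]
  push_cast
  linarith [lb_67, th_66]

lemma g_67 : G 67 := by
  unfold G
  rw [card_67]
  push_cast
  norm_num
  linarith [th_67, ub_68, Real.log_pos (by norm_num : (1:ℝ) < 2)]

lemma T_68 : T 68 = T 67 := by
  rw [show (68:ℕ) = 67+1 from rfl, T_succ_comp 67 (by norm_num)]
lemma card_68 : (T 68).card = 19 := by rw [T_68]; exact card_67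
lemma th_68 : ((1314:ℝ)/16) * Real.log 2 ≤ ∑ p ∈ T 68, Real.log p := by
  rw [T_68]; exact th_67

lemma g_68 : G 68 := by
  unfold G
  rw [card_68]
  push_cast
  norm_num
  linarith [th_68, ub_69, Real.log_pos (by norm_num : (1:ℝ) < 2)]

lemma T_69 : T 69 = T 68 := by
  rw [show (69:ℕ) = 68+1 from rfl, T_succ_comp 68 (by norm_num)]
lemma card_69 : (T 69).card = 19 := by rw [T_69]; exact card_68
lemma th_69 : ((1314:ℝ)/16) * Real.log 2 ≤ ∑ p ∈ T 69, Real.log p := by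
  rw [T_69]; exact th_68

lemma g_69 : G 69 := by
  unfold G
  rw [card_69]
  push_cast
  norm_num
  linarith [th_69, ub_70, Real.log_pos (by norm_num : (1:ℝ) < 2)]

lemma T_70 : T 70 = T 69 := by
  rw [show (70:ℕ) = 69+1 from rfl, T_succ_comp 69 (by norm_num)]
lemma card_70 : (T 70).card = 19 := by rw [T_70]; exact card_69
lemma th_70 : ((1314:ℝ)/16) * Real.log 2 ≤ ∑ p ∈ T 70, Real.log p := by
  rw [T_70]; exact th_69

lemma g_70 : G 70 := by
  unfold G
  rw [card_70]
  push_cast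
  norm_num
  linarith [th_70, ub_71, Real.log_pos (by norm_num : (1:ℝ) < 2)]

lemma T_71 : T 71 = insert 71 (T 70) := by
  rw [show (71:ℕ) = 70+1 from rfl, T_succ_prime 70 (by norm_num)]
lemma card_71 : (T 71).card = 20 := by
  rw [T_71, Finset.card_insert_of_notMem (succ_not_mem_T 70), card_70]
lemma th_71 : ((1412:ℝ)/16) * Real.log 2 ≤ ∑ p ∈ T 71, Real.log p := by
  rw [T_71, Finset.sum_insert (succ_not_mem_T 70)]
  push_cast
  linarith [lb_71, th_70]

lemma g_71 : G 71 := by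
  unfold G
  rw [card_71]
  push_cast
  norm_num
  linarith [th_71, ub_72, Real.log_pos (by norm_num : (1:ℝ) < 2)]

lemma T_72 : T 72 = T 71 := by
  rw [show (72:ℕ) = 71+1 from rfl, T_succ_comp 71 (by norm_num)]
lemma card_72 : (T 72).card = 20 := by rw [T_72]; exact card_71
lemma th_72 : ((1412:ℝ)/16) * Real.log 2 ≤ ∑ p ∈ T 72, Real.log p := by
  rw [T_72]; exact th_71

lemma g_72 : G 72 := by
  unfold G
  rw [card_72]
  push_cast
  norm_num
  linarith [th_72, ub_73, Real.log_pos (by norm_num : (1:ℝ) < 2)]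

lemma T_73 : T 73 = insert 73 (T 72) := by
  rw [show (73:ℕ) = 72+1 from rfl, T_succ_prime 72 (by norm_num)]
lemma card_73 : (T 73).card = 21 := by
  rw [T_73, Finset.card_insert_of_notMem (succ_not_mem_T 72), card_72]
lemma th_73 : ((1511:ℝ)/16) * Real.log 2 ≤ ∑ p ∈ T 73, Real.log p := by
  rw [T_73, Finset.sum_insert (succ_not_mem_T 72)]
  push_cast
  linarith [lb_73, th_72]

lemma g_73 : G 73 := by
  unfold G
  rw [card_73]
  push_cast
  norm_num
  linarith [th_73, ub_74, Real.log_pos (by norm_num : (1:ℝ) < 2)]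

lemma T_74 : T 74 = T 73 := by
  rw [show (74:ℕ) = 73+1 from rfl, T_succ_comp 73 (by norm_num)]
lemma card_74 : (T 74).card = 21 := by rw [T_74]; exact card_73
lemma th_74 : ((1511:ℝ)/16) * Real.log 2 ≤ ∑ p ∈ T 74, Real.log p := by
  rw [T_74]; exact th_73

lemma g_74 : G 74 := by
  unfold G
  rw [card_74]
  push_cast
  norm_num
  linarith [th_74, ub_75, Real.log_pos (by norm_num : (1:ℝ) < 2)]

lemma T_75 : T 75 = T 74 := by
  rw [show (75:ℕ) = 74+1 from rfl, T_succ_comp 74 (by norm_num)]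
lemma card_75 : (T 75).card = 21 := by rw [T_75]; exact card_74
lemma th_75 : ((1511:ℝ)/16) * Real.log 2 ≤ ∑ p ∈ T 75, Real.log p := by
  rw [T_75]; exact th_74

lemma g_75 : G 75 := by
  unfold G
  rw [card_75]
  push_cast
  norm_num
  linarith [th_75, ub_76, Real.log_pos (by norm_num : (1:ℝ) < 2)]

lemma T_76 : T 76 = T 75 := by
  rw [show (76:ℕ) = 75+1 from rfl, T_succ_comp 75 (by norm_num)]
lemma card_76 : (T 76).card = 21 := by rw [T_76]; exact card_75
lemma th_76 : ((1511:ℝ)/16) * Real.log 2 ≤ ∑ p ∈ T 76, Real.log p := by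
  rw [T_76]; exact th_75

lemma g_76 : G 76 := by
  unfold G
  rw [card_76]
  push_cast
  norm_num
  linarith [th_76, ub_77, Real.log_pos (by norm_num : (1:ℝ) < 2)]

lemma T_77 : T 77 = T 76 := by
  rw [show (77:ℕ) = 76+1 from rfl, T_succ_comp 76 (by norm_num)]
lemma card_77 : (T 77).card = 21 := by rw [T_77]; exact card_76
lemma th_77 : ((1511:ℝ)/16) * Real.log 2 ≤ ∑ p ∈ T 77, Real.log p := by
  rw [T_77]; exact th_76

lemma g_77 : G 77 := by
  unfold G
  rw [card_77]
  push_cast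
  norm_num
  linarith [th_77, ub_78, Real.log_pos (by norm_num : (1:ℝ) < 2)]

lemma T_78 : T 78 = T 77 := by
  rw [show (78:ℕ) = 77+1 from rfl, T_succ_comp 77 (by norm_num)]
lemma card_78 : (T 78).card = 21 := by rw [T_78]; exact card_77
lemma th_78 : ((1511:ℝ)/16) * Real.log 2 ≤ ∑ p ∈ T 78, Real.log p := by
  rw [T_78]; exact th_77

lemma g_78 : G 78 := by
  unfold G
  rw [card_78]
  push_cast
  norm_num
  linarith [th_78, ub_79, Real.log_pos (by norm_num : (1:ℝ) < 2)]

lemma T_79 : T 79 = insert 79 (T 78) := by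
  rw [show (79:ℕ) = 78+1 from rfl, T_succ_prime 78 (by norm_num)]
lemma card_79 : (T 79).card = 22 := by
  rw [T_79, Finset.card_insert_of_notMem (succ_not_mem_T 78), card_78]
lemma th_79 : ((1611:ℝ)/16) * Real.log 2 ≤ ∑ p ∈ T 79, Real.log p := by
  rw [T_79, Finset.sum_insert (succ_not_mem_T 78)]
  push_cast
  linarith [lb_79, th_78]

lemma g_79 : G 79 := by
  unfold G
  rw [card_79]
  push_cast
  norm_num
  linarith [th_79, ub_80, Real.log_pos (by norm_num : (1:ℝ) < 2)]

lemma T_80 : T 80 = T 79 := by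
  rw [show (80:ℕ) = 79+1 from rfl, T_succ_comp 79 (by norm_num)]
lemma card_80 : (T 80).card = 22 := by rw [T_80]; exact card_79
lemma th_80 : ((1611:ℝ)/16) * Real.log 2 ≤ ∑ p ∈ T 80, Real.log p := by
  rw [T_80]; exact th_79

lemma g_80 : G 80 := by
  unfold G
  rw [card_80]
  push_cast
  norm_num
  linarith [th_80, ub_81, Real.log_pos (by norm_num : (1:ℝ) < 2)]

lemma T_81 : T 81 = T 80 := by
  rw [show (81:ℕ) = 80+1 from rfl, T_succ_comp 80 (by norm_num)]
lemma card_81 : (T 81).card = 22 := by rw [T_81]; exact card_80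
lemma th_81 : ((1611:ℝ)/16) * Real.log 2 ≤ ∑ p ∈ T 81, Real.log p := by
  rw [T_81]; exact th_80

lemma g_81 : G 81 := by
  unfold G
  rw [card_81]
  push_cast
  norm_num
  linarith [th_81, ub_82, Real.log_pos (by norm_num : (1:ℝ) < 2)]

lemma T_82 : T 82 = T 81 := by
  rw [show (82:ℕ) = 81+1 from rfl, T_succ_comp 81 (by norm_num)]
lemma card_82 : (T 82).card = 22 := by rw [T_82]; exact card_81
lemma th_82 : ((1611:ℝ)/16) * Real.log 2 ≤ ∑ p ∈ T 82, Real.log p := by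
  rw [T_82]; exact th_81

lemma g_82 : G 82 := by
  unfold G
  rw [card_82]
  push_cast
  norm_num
  linarith [th_82, ub_83, Real.log_pos (by norm_num : (1:ℝ) < 2)]

lemma T_83 : T 83 = insert 83 (T 82) := by
  rw [show (83:ℕ) = 82+1 from rfl, T_succ_prime 82 (by norm_num)]
lemma card_83 : (T 83).card = 23 := by
  rw [T_83, Finset.card_insert_of_notMem (succ_not_mem_T 82), card_82]
lemma th_83 : ((1713:ℝ)/16) * Real.log 2 ≤ ∑ p ∈ T 83, Real.log p := by
  rw [T_83, Finset.sum_insert (succ_not_mem_T 82)]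
  push_cast
  linarith [lb_83, th_82]

lemma g_83 : G 83 := by
  unfold G
  rw [card_83]
  push_cast
  norm_num
  linarith [th_83, ub_84, Real.log_pos (by norm_num : (1:ℝ) < 2)]

lemma T_84 : T 84 = T 83 := by
  rw [show (84:ℕ) = 83+1 from rfl, T_succ_comp 83 (by norm_num)]
lemma card_84 : (T 84).card = 23 := by rw [T_84]; exact card_83
lemma th_84 : ((1713:ℝ)/16) * Real.log 2 ≤ ∑ p ∈ T 84, Real.log p := by
  rw [T_84]; exact th_83

lemma g_84 : G 84 := by
  unfold G
  rw [card_84]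
  push_cast
  norm_num
  linarith [th_84, ub_85, Real.log_pos (by norm_num : (1:ℝ) < 2)]

lemma T_85 : T 85 = T 84 := by
  rw [show (85:ℕ) = 84+1 from rfl, T_succ_comp 84 (by norm_num)]
lemma card_85 : (T 85).card = 23 := by rw [T_85]; exact card_84
lemma th_85 : ((1713:ℝ)/16) * Real.log 2 ≤ ∑ p ∈ T 85, Real.log p := by
  rw [T_85]; exact th_84

lemma g_85 : G 85 := by
  unfold G
  rw [card_85]
  push_cast
  norm_num
  linarith [th_85, ub_86, Real.log_pos (by norm_num : (1:ℝ) < 2)]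

lemma T_86 : T 86 = T 85 := by
  rw [show (86:ℕ) = 85+1 from rfl, T_succ_comp 85 (by norm_num)]
lemma card_86 : (T 86).card = 23 := by rw [T_86]; exact card_85
lemma th_86 : ((1713:ℝ)/16) * Real.log 2 ≤ ∑ p ∈ T 86, Real.log p := by
  rw [T_86]; exact th_85

lemma g_86 : G 86 := by
  unfold G
  rw [card_86]
  push_cast
  norm_num
  linarith [th_86, ub_87, Real.log_pos (by norm_num : (1:ℝ) < 2)]

lemma T_87 : T 87 = T 86 := by
  rw [show (87:ℕ) = 86+1 from rfl, T_succ_comp 86 (by norm_num)]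
lemma card_87 : (T 87).card = 23 := by rw [T_87]; exact card_86
lemma th_87 : ((1713:ℝ)/16) * Real.log 2 ≤ ∑ p ∈ T 87, Real.log p := by
  rw [T_87]; exact th_86

lemma g_87 : G 87 := by
  unfold G
  rw [card_87]
  push_cast
  norm_num
  linarith [th_87, ub_88, Real.log_pos (by norm_num : (1:ℝ) < 2)]

lemma T_88 : T 88 = T 87 := by
  rw [show (88:ℕ) = 87+1 from rfl, T_succ_comp 87 (by norm_num)]
lemma card_88 : (T 88).card = 23 := by rw [T_88]; exact card_87
lemma th_88 : ((1713:ℝ)/16) * Real.log 2 ≤ ∑ p ∈ T 88, Real.log p := by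
  rw [T_88]; exact th_87

lemma g_88 : G 88 := by
  unfold G
  rw [card_88]
  push_cast
  norm_num
  linarith [th_88, ub_89, Real.log_pos (by norm_num : (1:ℝ) < 2)]

lemma T_89 : T 89 = insert 89 (T 88) := by
  rw [show (89:ℕ) = 88+1 from rfl, T_succ_prime 88 (by norm_num)]
lemma card_89 : (T 89).card = 24 := by
  rw [T_89, Finset.card_insert_of_notMem (succ_not_mem_T 88), card_88]
lemma th_89 : ((1816:ℝ)/16) * Real.log 2 ≤ ∑ p ∈ T 89, Real.log p := by
  rw [T_89, Finset.sum_insert (succ_not_mem_T 88)]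
  push_cast
  linarith [lb_89, th_88]

lemma g_89 : G 89 := by
  unfold G
  rw [card_89]
  push_cast
  norm_num
  linarith [th_89, ub_90, Real.log_pos (by norm_num : (1:ℝ) < 2)]

lemma T_90 : T 90 = T 89 := by
  rw [show (90:ℕ) = 89+1 from rfl, T_succ_comp 89 (by norm_num)]
lemma card_90 : (T 90).card = 24 := by rw [T_90]; exact card_89
lemma th_90 : ((1816:ℝ)/16) * Real.log 2 ≤ ∑ p ∈ T 90, Real.log p := by
  rw [T_90]; exact th_89

lemma g_90 : G 90 := by
  unfold G
  rw [card_90]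
  push_cast
  norm_num
  linarith [th_90, ub_91, Real.log_pos (by norm_num : (1:ℝ) < 2)]

lemma T_91 : T 91 = T 90 := by
  rw [show (91:ℕ) = 90+1 from rfl, T_succ_comp 90 (by norm_num)]
lemma card_91 : (T 91).card = 24 := by rw [T_91]; exact card_90
lemma th_91 : ((1816:ℝ)/16) * Real.log 2 ≤ ∑ p ∈ T 91, Real.log p := by
  rw [T_91]; exact th_90

lemma g_91 : G 91 := by
  unfold G
  rw [card_91]
  push_cast
  norm_num
  linarith [th_91, ub_92, Real.log_pos (by norm_num : (1:ℝ) < 2)]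

lemma T_92 : T 92 = T 91 := by
  rw [show (92:ℕ) = 91+1 from rfl, T_succ_comp 91 (by norm_num)]
lemma card_92 : (T 92).card = 24 := by rw [T_92]; exact card_91
lemma th_92 : ((1816:ℝ)/16) * Real.log 2 ≤ ∑ p ∈ T 92, Real.log p := by
  rw [T_92]; exact th_91

lemma g_92 : G 92 := by
  unfold G
  rw [card_92]
  push_cast
  norm_num
  linarith [th_92, ub_93, Real.log_pos (by norm_num : (1:ℝ) < 2)]

lemma T_93 : T 93 = T 92 := by
  rw [show (93:ℕ) = 92+1 from rfl, T_succ_comp 92 (by norm_num)]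
lemma card_93 : (T 93).card = 24 := by rw [T_93]; exact card_92
lemma th_93 : ((1816:ℝ)/16) * Real.log 2 ≤ ∑ p ∈ T 93, Real.log p := by
  rw [T_93]; exact th_92

lemma g_93 : G 93 := by
  unfold G
  rw [card_93]
  push_cast
  norm_num
  linarith [th_93, ub_94, Real.log_pos (by norm_num : (1:ℝ) < 2)]

lemma T_94 : T 94 = T 93 := by
  rw [show (94:ℕ) = 93+1 from rfl, T_succ_comp 93 (by norm_num)]
lemma card_94 : (T 94).card = 24 := by rw [T_94]; exact card_93
lemma th_94 : ((1816:ℝ)/16) * Real.log 2 ≤ ∑ p ∈ T 94, Real.log p := by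
  rw [T_94]; exact th_93

lemma g_94 : G 94 := by
  unfold G
  rw [card_94]
  push_cast
  norm_num
  linarith [th_94, ub_95, Real.log_pos (by norm_num : (1:ℝ) < 2)]

lemma T_95 : T 95 = T 94 := by
  rw [show (95:ℕ) = 94+1 from rfl, T_succ_comp 94 (by norm_num)]
lemma card_95 : (T 95).card = 24 := by rw [T_95]; exact card_94
lemma th_95 : ((1816:ℝ)/16) * Real.log 2 ≤ ∑ p ∈ T 95, Real.log p := by
  rw [T_95]; exact th_94

lemma g_95 : G 95 := by
  unfold G
  rw [card_95]
  push_cast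
  norm_num
  linarith [th_95, ub_96, Real.log_pos (by norm_num : (1:ℝ) < 2)]

lemma T_96 : T 96 = T 95 := by
  rw [show (96:ℕ) = 95+1 from rfl, T_succ_comp 95 (by norm_num)]
lemma card_96 : (T 96).card = 24 := by rw [T_96]; exact card_95
lemma th_96 : ((1816:ℝ)/16) * Real.log 2 ≤ ∑ p ∈ T 96, Real.log p := by
  rw [T_96]; exact th_95

lemma g_96 : G 96 := by
  unfold G
  rw [card_96]
  push_cast
  norm_num
  linarith [th_96, ub_97, Real.log_pos (by norm_num : (1:ℝ) < 2)]

lemma T_97 : T 97 = insert 97 (T 96) := by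
  rw [show (97:ℕ) = 96+1 from rfl, T_succ_prime 96 (by norm_num)]
lemma card_97 : (T 97).card = 25 := by
  rw [T_97, Finset.card_insert_of_notMem (succ_not_mem_T 96), card_96]
lemma th_97 : ((1921:ℝ)/16) * Real.log 2 ≤ ∑ p ∈ T 97, Real.log p := by
  rw [T_97, Finset.sum_insert (succ_not_mem_T 96)]
  push_cast
  linarith [lb_97, th_96]

lemma g_97 : G 97 := by
  unfold G
  rw [card_97]
  push_cast
  norm_num
  linarith [th_97, ub_98, Real.log_pos (by norm_num : (1:ℝ) < 2)]

lemma T_98 : T 98 = T 97 := by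
  rw [show (98:ℕ) = 97+1 from rfl, T_succ_comp 97 (by norm_num)]
lemma card_98 : (T 98).card = 25 := by rw [T_98]; exact card_97
lemma th_98 : ((1921:ℝ)/16) * Real.log 2 ≤ ∑ p ∈ T 98, Real.log p := by
  rw [T_98]; exact th_97

lemma g_98 : G 98 := by
  unfold G
  rw [card_98]
  push_cast
  norm_num
  linarith [th_98, ub_99, Real.log_pos (by norm_num : (1:ℝ) < 2)]

lemma T_99 : T 99 = T 98 := by
  rw [show (99:ℕ) = 98+1 from rfl, T_succ_comp 98 (by norm_num)]
lemma card_99 : (T 99).card = 25 := by rw [T_99]; exact card_98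
lemma th_99 : ((1921:ℝ)/16) * Real.log 2 ≤ ∑ p ∈ T 99, Real.log p := by
  rw [T_99]; exact th_98

lemma g_99 : G 99 := by
  unfold G
  rw [card_99]
  push_cast
  norm_num
  linarith [th_99, ub_100, Real.log_pos (by norm_num : (1:ℝ) < 2)]

lemma T_100 : T 100 = T 99 := by
  rw [show (100:ℕ) = 99+1 from rfl, T_succ_comp 99 (by norm_num)]
lemma card_100 : (T 100).card = 25 := by rw [T_100]; exact card_99
lemma th_100 : ((1921:ℝ)/16) * Real.log 2 ≤ ∑ p ∈ T 100, Real.log p := by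
  rw [T_100]; exact th_99

lemma g_100 : G 100 := by
  unfold G
  rw [card_100]
  push_cast
  norm_num
  linarith [th_100, ub_101, Real.log_pos (by norm_num : (1:ℝ) < 2)]

lemma T_101 : T 101 = insert 101 (T 100) := by
  rw [show (101:ℕ) = 100+1 from rfl, T_succ_prime 100 (by norm_num)]
lemma card_101 : (T 101).card = 26 := by
  rw [T_101, Finset.card_insert_of_notMem (succ_not_mem_T 100), card_100]
lemma th_101 : ((2027:ℝ)/16) * Real.log 2 ≤ ∑ p ∈ T 101, Real.log p := by
  rw [T_101, Finset.sum_insert (succ_not_mem_T 100)]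
  push_cast
  linarith [lb_101, th_100]

lemma g_101 : G 101 := by
  unfold G
  rw [card_101]
  push_cast
  norm_num
  linarith [th_101, ub_102, Real.log_pos (by norm_num : (1:ℝ) < 2)]

lemma T_102 : T 102 = T 101 := by
  rw [show (102:ℕ) = 101+1 from rfl, T_succ_comp 101 (by norm_num)]
lemma card_102 : (T 102).card = 26 := by rw [T_102]; exact card_101
lemma th_102 : ((2027:ℝ)/16) * Real.log 2 ≤ ∑ p ∈ T 102, Real.log p := by
  rw [T_102]; exact th_101

lemma g_102 : G 102 := by
  unfold G
  rw [card_102]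
  push_cast
  norm_num
  linarith [th_102, ub_103, Real.log_pos (by norm_num : (1:ℝ) < 2)]

lemma T_103 : T 103 = insert 103 (T 102) := by
  rw [show (103:ℕ) = 102+1 from rfl, T_succ_prime 102 (by norm_num)]
lemma card_103 : (T 103).card = 27 := by
  rw [T_103, Finset.card_insert_of_notMem (succ_not_mem_T 102), card_102]
lemma th_103 : ((2133:ℝ)/16) * Real.log 2 ≤ ∑ p ∈ T 103, Real.log p := by
  rw [T_103, Finset.sum_insert (succ_not_mem_T 102)]
  push_cast
  linarith [lb_103, th_102]

lemma g_103 : G 103 := by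
  unfold G
  rw [card_103]
  push_cast
  norm_num
  linarith [th_103, ub_104, Real.log_pos (by norm_num : (1:ℝ) < 2)]

lemma T_104 : T 104 = T 103 := by
  rw [show (104:ℕ) = 103+1 from rfl, T_succ_comp 103 (by norm_num)]
lemma card_104 : (T 104).card = 27 := by rw [T_104]; exact card_103
lemma th_104 : ((2133:ℝ)/16) * Real.log 2 ≤ ∑ p ∈ T 104, Real.log p := by
  rw [T_104]; exact th_103

lemma g_104 : G 104 := by
  unfold G
  rw [card_104]
  push_cast
  norm_num
  linarith [th_104, ub_105, Real.log_pos (by norm_num : (1:ℝ) < 2)]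

lemma T_105 : T 105 = T 104 := by
  rw [show (105:ℕ) = 104+1 from rfl, T_succ_comp 104 (by norm_num)]
lemma card_105 : (T 105).card = 27 := by rw [T_105]; exact card_104
lemma th_105 : ((2133:ℝ)/16) * Real.log 2 ≤ ∑ p ∈ T 105, Real.log p := by
  rw [T_105]; exact th_104

lemma g_105 : G 105 := by
  unfold G
  rw [card_105]
  push_cast
  norm_num
  linarith [th_105, ub_106, Real.log_pos (by norm_num : (1:ℝ) < 2)]

lemma T_106 : T 106 = T 105 := by
  rw [show (106:ℕ) = 105+1 from rfl, T_succ_comp 105 (by norm_num)]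
lemma card_106 : (T 106).card = 27 := by rw [T_106]; exact card_105
lemma th_106 : ((2133:ℝ)/16) * Real.log 2 ≤ ∑ p ∈ T 106, Real.log p := by
  rw [T_106]; exact th_105

lemma g_106 : G 106 := by
  unfold G
  rw [card_106]
  push_cast
  norm_num
  linarith [th_106, ub_107, Real.log_pos (by norm_num : (1:ℝ) < 2)]

lemma T_107 : T 107 = insert 107 (T 106) := by
  rw [show (107:ℕ) = 106+1 from rfl, T_succ_prime 106 (by norm_num)]
lemma card_107 : (T 107).card = 28 := by
  rw [T_107, Finset.card_insert_of_notMem (succ_not_mem_T 106), card_106]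
lemma th_107 : ((2240:ℝ)/16) * Real.log 2 ≤ ∑ p ∈ T 107, Real.log p := by
  rw [T_107, Finset.sum_insert (succ_not_mem_T 106)]
  push_cast
  linarith [lb_107, th_106]

lemma g_107 : G 107 := by
  unfold G
  rw [card_107]
  push_cast
  norm_num
  linarith [th_107, ub_108, Real.log_pos (by norm_num : (1:ℝ) < 2)]

lemma T_108 : T 108 = T 107 := by
  rw [show (108:ℕ) = 107+1 from rfl, T_succ_comp 107 (by norm_num)]
lemma card_108 : (T 108).card = 28 := by rw [T_108]; exact card_107
lemma th_108 : ((2240:ℝ)/16) * Real.log 2 ≤ ∑ p ∈ T 108, Real.log p := by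
  rw [T_108]; exact th_107

lemma g_108 : G 108 := by
  unfold G
  rw [card_108]
  push_cast
  norm_num
  linarith [th_108, ub_109, Real.log_pos (by norm_num : (1:ℝ) < 2)]

lemma T_109 : T 109 = insert 109 (T 108) := by
  rw [show (109:ℕ) = 108+1 from rfl, T_succ_prime 108 (by norm_num)]
lemma card_109 : (T 109).card = 29 := by
  rw [T_109, Finset.card_insert_of_notMem (succ_not_mem_T 108), card_108]
lemma th_109 : ((2348:ℝ)/16) * Real.log 2 ≤ ∑ p ∈ T 109, Real.log p := by
  rw [T_109, Finset.sum_insert (succ_not_mem_T 108)]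
  push_cast
  linarith [lb_109, th_108]

lemma g_109 : G 109 := by
  unfold G
  rw [card_109]
  push_cast
  norm_num
  linarith [th_109, ub_110, Real.log_pos (by norm_num : (1:ℝ) < 2)]

lemma T_110 : T 110 = T 109 := by
  rw [show (110:ℕ) = 109+1 from rfl, T_succ_comp 109 (by norm_num)]
lemma card_110 : (T 110).card = 29 := by rw [T_110]; exact card_109
lemma th_110 : ((2348:ℝ)/16) * Real.log 2 ≤ ∑ p ∈ T 110, Real.log p := by
  rw [T_110]; exact th_109

lemma g_110 : G 110 := by
  unfold G
  rw [card_110]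
  push_cast
  norm_num
  linarith [th_110, ub_111, Real.log_pos (by norm_num : (1:ℝ) < 2)]

lemma T_111 : T 111 = T 110 := by
  rw [show (111:ℕ) = 110+1 from rfl, T_succ_comp 110 (by norm_num)]
lemma card_111 : (T 111).card = 29 := by rw [T_111]; exact card_110
lemma th_111 : ((2348:ℝ)/16) * Real.log 2 ≤ ∑ p ∈ T 111, Real.log p := by
  rw [T_111]; exact th_110

lemma g_111 : G 111 := by
  unfold G
  rw [card_111]
  push_cast
  norm_num
  linarith [th_111, ub_112, Real.log_pos (by norm_num : (1:ℝ) < 2)]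

lemma T_112 : T 112 = T 111 := by
  rw [show (112:ℕ) = 111+1 from rfl, T_succ_comp 111 (by norm_num)]
lemma card_112 : (T 112).card = 29 := by rw [T_112]; exact card_111
lemma th_112 : ((2348:ℝ)/16) * Real.log 2 ≤ ∑ p ∈ T 112, Real.log p := by
  rw [T_112]; exact th_111

lemma g_112 : G 112 := by
  unfold G
  rw [card_112]
  push_cast
  norm_num
  linarith [th_112, ub_113, Real.log_pos (by norm_num : (1:ℝ) < 2)]

lemma T_113 : T 113 = insert 113 (T 112) := by
  rw [show (113:ℕ) = 112+1 from rfl, T_succ_prime 112 (by norm_num)]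
lemma card_113 : (T 113).card = 30 := by
  rw [T_113, Finset.card_insert_of_notMem (succ_not_mem_T 112), card_112]
lemma th_113 : ((2457:ℝ)/16) * Real.log 2 ≤ ∑ p ∈ T 113, Real.log p := by
  rw [T_113, Finset.sum_insert (succ_not_mem_T 112)]
  push_cast
  linarith [lb_113, th_112]

lemma g_113 : G 113 := by
  unfold G
  rw [card_113]
  push_cast
  norm_num
  linarith [th_113, ub_114, Real.log_pos (by norm_num : (1:ℝ) < 2)]

lemma T_114 : T 114 = T 113 := by
  rw [show (114:ℕ) = 113+1 from rfl, T_succ_comp 113 (by norm_num)]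
lemma card_114 : (T 114).card = 30 := by rw [T_114]; exact card_113
lemma th_114 : ((2457:ℝ)/16) * Real.log 2 ≤ ∑ p ∈ T 114, Real.log p := by
  rw [T_114]; exact th_113

lemma g_114 : G 114 := by
  unfold G
  rw [card_114]
  push_cast
  norm_num
  linarith [th_114, ub_115, Real.log_pos (by norm_num : (1:ℝ) < 2)]

lemma T_115 : T 115 = T 114 := by
  rw [show (115:ℕ) = 114+1 from rfl, T_succ_comp 114 (by norm_num)]
lemma card_115 : (T 115).card = 30 := by rw [T_115]; exact card_114
lemma th_115 : ((2457:ℝ)/16) * Real.log 2 ≤ ∑ p ∈ T 115, Real.log p := by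
  rw [T_115]; exact th_114

lemma g_115 : G 115 := by
  unfold G
  rw [card_115]
  push_cast
  norm_num
  linarith [th_115, ub_116, Real.log_pos (by norm_num : (1:ℝ) < 2)]

lemma T_116 : T 116 = T 115 := by
  rw [show (116:ℕ) = 115+1 from rfl, T_succ_comp 115 (by norm_num)]
lemma card_116 : (T 116).card = 30 := by rw [T_116]; exact card_115
lemma th_116 : ((2457:ℝ)/16) * Real.log 2 ≤ ∑ p ∈ T 116, Real.log p := by
  rw [T_116]; exact th_115

lemma g_116 : G 116 := by
  unfold G
  rw [card_116]
  push_cast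
  norm_num
  linarith [th_116, ub_117, Real.log_pos (by norm_num : (1:ℝ) < 2)]

lemma T_117 : T 117 = T 116 := by
  rw [show (117:ℕ) = 116+1 from rfl, T_succ_comp 116 (by norm_num)]
lemma card_117 : (T 117).card = 30 := by rw [T_117]; exact card_116
lemma th_117 : ((2457:ℝ)/16) * Real.log 2 ≤ ∑ p ∈ T 117, Real.log p := by
  rw [T_117]; exact th_116

lemma g_117 : G 117 := by
  unfold G
  rw [card_117]
  push_cast
  norm_num
  linarith [th_117, ub_118, Real.log_pos (by norm_num : (1:ℝ) < 2)]

lemma T_118 : T 118 = T 117 := by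
  rw [show (118:ℕ) = 117+1 from rfl, T_succ_comp 117 (by norm_num)]
lemma card_118 : (T 118).card = 30 := by rw [T_118]; exact card_117
lemma th_118 : ((2457:ℝ)/16) * Real.log 2 ≤ ∑ p ∈ T 118, Real.log p := by
  rw [T_118]; exact th_117

lemma g_118 : G 118 := by
  unfold G
  rw [card_118]
  push_cast
  norm_num
  linarith [th_118, ub_119, Real.log_pos (by norm_num : (1:ℝ) < 2)]

lemma T_119 : T 119 = T 118 := by
  rw [show (119:ℕ) = 118+1 from rfl, T_succ_comp 118 (by norm_num)]
lemma card_119 : (T 119).card = 30 := by rw [T_119]; exact card_118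
lemma th_119 : ((2457:ℝ)/16) * Real.log 2 ≤ ∑ p ∈ T 119, Real.log p := by
  rw [T_119]; exact th_118

lemma g_119 : G 119 := by
  unfold G
  rw [card_119]
  push_cast
  norm_num
  linarith [th_119, ub_120, Real.log_pos (by norm_num : (1:ℝ) < 2)]

lemma T_120 : T 120 = T 119 := by
  rw [show (120:ℕ) = 119+1 from rfl, T_succ_comp 119 (by norm_num)]
lemma card_120 : (T 120).card = 30 := by rw [T_120]; exact card_119
lemma th_120 : ((2457:ℝ)/16) * Real.log 2 ≤ ∑ p ∈ T 120, Real.log p := by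
  rw [T_120]; exact th_119

lemma g_120 : G 120 := by
  unfold G
  rw [card_120]
  push_cast
  norm_num
  linarith [th_120, ub_121, Real.log_pos (by norm_num : (1:ℝ) < 2)]

lemma T_121 : T 121 = T 120 := by
  rw [show (121:ℕ) = 120+1 from rfl, T_succ_comp 120 (by norm_num)]
lemma card_121 : (T 121).card = 30 := by rw [T_121]; exact card_120
lemma th_121 : ((2457:ℝ)/16) * Real.log 2 ≤ ∑ p ∈ T 121, Real.log p := by
  rw [T_121]; exact th_120

lemma g_121 : G 121 := by
  unfold G
  rw [card_121]
  push_cast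
  norm_num
  linarith [th_121, ub_122, Real.log_pos (by norm_num : (1:ℝ) < 2)]

lemma T_122 : T 122 = T 121 := by
  rw [show (122:ℕ) = 121+1 from rfl, T_succ_comp 121 (by norm_num)]
lemma card_122 : (T 122).card = 30 := by rw [T_122]; exact card_121
lemma th_122 : ((2457:ℝ)/16) * Real.log 2 ≤ ∑ p ∈ T 122, Real.log p := by
  rw [T_122]; exact th_121

lemma g_122 : G 122 := by
  unfold G
  rw [card_122]
  push_cast
  norm_num
  linarith [th_122, ub_123, Real.log_pos (by norm_num : (1:ℝ) < 2)]

lemma T_123 : T 123 = T 122 := by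
  rw [show (123:ℕ) = 122+1 from rfl, T_succ_comp 122 (by norm_num)]
lemma card_123 : (T 123).card = 30 := by rw [T_123]; exact card_122
lemma th_123 : ((2457:ℝ)/16) * Real.log 2 ≤ ∑ p ∈ T 123, Real.log p := by
  rw [T_123]; exact th_122

lemma g_123 : G 123 := by
  unfold G
  rw [card_123]
  push_cast
  norm_num
  linarith [th_123, ub_124, Real.log_pos (by norm_num : (1:ℝ) < 2)]

lemma T_124 : T 124 = T 123 := by
  rw [show (124:ℕ) = 123+1 from rfl, T_succ_comp 123 (by norm_num)]
lemma card_124 : (T 124).card = 30 := by rw [T_124]; exact card_123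
lemma th_124 : ((2457:ℝ)/16) * Real.log 2 ≤ ∑ p ∈ T 124, Real.log p := by
  rw [T_124]; exact th_123

lemma g_124 : G 124 := by
  unfold G
  rw [card_124]
  push_cast
  norm_num
  linarith [th_124, ub_125, Real.log_pos (by norm_num : (1:ℝ) < 2)]

lemma T_125 : T 125 = T 124 := by
  rw [show (125:ℕ) = 124+1 from rfl, T_succ_comp 124 (by norm_num)]
lemma card_125 : (T 125).card = 30 := by rw [T_125]; exact card_124
lemma th_125 : ((2457:ℝ)/16) * Real.log 2 ≤ ∑ p ∈ T 125, Real.log p := by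
  rw [T_125]; exact th_124

lemma g_125 : G 125 := by
  unfold G
  rw [card_125]
  push_cast
  norm_num
  linarith [th_125, ub_126, Real.log_pos (by norm_num : (1:ℝ) < 2)]

lemma G_le125 (n : ℕ) (h3 : 3 ≤ n) (h : n ≤ 125) : G n := by
  interval_cases n
  · exact g_3
  · exact g_4
  · exact g_5
  · exact g_6
  · exact g_7
  · exact g_8
  · exact g_9
  · exact g_10
  · exact g_11
  · exact g_12
  · exact g_13
  · exact g_14
  · exact g_15
  · exact g_16
  · exact g_17
  · exact g_18
  · exact g_19
  · exact g_20
  · exact g_21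
  · exact g_22
  · exact g_23
  · exact g_24
  · exact g_25
  · exact g_26
  · exact g_27
  · exact g_28
  · exact g_29
  · exact g_30
  · exact g_31
  · exact g_32
  · exact g_33
  · exact g_34
  · exact g_35
  · exact g_36
  · exact g_37
  · exact g_38
  · exact g_39
  · exact g_40
  · exact g_41
  · exact g_42
  · exact g_43
  · exact g_44
  · exact g_45
  · exact g_46
  · exact g_47
  · exact g_48
  · exact g_49
  · exact g_50
  · exact g_51
  · exact g_52
  · exact g_53
  · exact g_54
  · exact g_55
  · exact g_56
  · exact g_57
  · exact g_58
  · exact g_59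
  · exact g_60
  · exact g_61
  · exact g_62
  · exact g_63
  · exact g_64
  · exact g_65
  · exact g_66
  · exact g_67
  · exact g_68
  · exact g_69
  · exact g_70
  · exact g_71
  · exact g_72
  · exact g_73
  · exact g_74
  · exact g_75
  · exact g_76
  · exact g_77
  · exact g_78
  · exact g_79
  · exact g_80
  · exact g_81
  · exact g_82
  · exact g_83
  · exact g_84
  · exact g_85
  · exact g_86
  · exact g_87
  · exact g_88
  · exact g_89
  · exact g_90
  · exact g_91
  · exact g_92
  · exact g_93
  · exact g_94
  · exact g_95
  · exact g_96
  · exact g_97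
  · exact g_98
  · exact g_99
  · exact g_100
  · exact g_101
  · exact g_102
  · exact g_103
  · exact g_104
  · exact g_105
  · exact g_106
  · exact g_107
  · exact g_108
  · exact g_109
  · exact g_110
  · exact g_111
  · exact g_112
  · exact g_113
  · exact g_114
  · exact g_115
  · exact g_116
  · exact g_117
  · exact g_118
  · exact g_119
  · exact g_120
  · exact g_121
  · exact g_122
  · exact g_123
  · exact g_124
  · exact g_125

lemma G_all (n : ℕ) (hn : 3 ≤ n) : G n := by
  rcases le_or_gt n 125 with h | h
  · exact G_le125 n hn h
  · have key : ∀ k, G (125 + k) := by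
      intro k
      induction k with
      | zero => exact G_le125 125 (by norm_num) le_rfl
      | succ j ihj =>
        have := step (125 + j) (by omega) ihj
        rwa [show 125 + (j + 1) = (125 + j) + 1 from rfl]
    have h2 := key (n - 125)
    rwa [show 125 + (n - 125) = n by omega] at h2

theorem prime_counting_upper_bound (x : ℝ) (hx : 2 ≤ x) :
    (primePi x : ℝ) ≤
      ⌈(((x - 1) / 2) * Real.log 2 + chebyshevTheta x) / Real.log x⌉ := by
  obtain ⟨n, hn⟩ : ∃ n, ⌊x⌋₊ = n := ⟨_, rfl⟩
  have hlogx : 0 < Real.log x := Real.log_pos (by linarith)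
  have hn2 : 2 ≤ n := by
    rw [← hn]
    exact Nat.le_floor (by exact_mod_cast hx)
  have hxn : (n : ℝ) ≤ x := by
    rw [← hn]
    exact Nat.floor_le (by linarith)
  have hxn1 : x < (n : ℝ) + 1 := by
    rw [← hn]
    exact Nat.lt_floor_add_one x
  have hpi : primePi x = (T n).card := by
    unfold primePi T
    rw [hn]
  have hth : chebyshevTheta x = ∑ p ∈ T n, Real.log p := by
    unfold chebyshevTheta T
    rw [hn]
  have hlog2pos : (0:ℝ) < Real.log 2 := Real.log_pos (by norm_num)
  have hmain : ((primePi x : ℝ) - 1) * Real.log x <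
      ((x - 1) / 2) * Real.log 2 + chebyshevTheta x := by
    rw [hpi, hth]
    rcases eq_or_lt_of_le hn2 with h2 | h3
    · subst h2
      have hT2 : T 2 = {2} := by decide
      rw [hT2, Finset.sum_singleton]
      push_cast
      norm_num
      have hnn : (0:ℝ) ≤ (x - 1) / 2 * Real.log 2 := by
        apply mul_nonneg (by linarith) hlog2pos.le
      linarith
    · have hG := G_all n h3
      unfold G at hG
      have hcge : (2:ℝ) ≤ ((T n).card : ℝ) := by
        have hsub : ({2, 3} : Finset ℕ) ⊆ T n := by
          intro p hp
          simp only [Finset.mem_insert, Finset.mem_singleton] at hp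
          simp only [T, Finset.mem_filter, Finset.mem_range]
          rcases hp with rfl | rfl
          · exact ⟨by omega, Nat.prime_two⟩
          · exact ⟨by omega, Nat.prime_three⟩
        have h23 : ({2, 3} : Finset ℕ).card = 2 := by decide
        have := Finset.card_le_card hsub
        rw [h23] at this
        exact_mod_cast this
      have hlt : Real.log x < Real.log ((n : ℝ) + 1) := Real.log_lt_log (by linarith) hxn1
      have h1 : (((T n).card : ℝ) - 1) * Real.log x <
          (((T n).card : ℝ) - 1) * Real.log ((n : ℝ) + 1) := by
        apply mul_lt_mul_of_pos_left hlt (by linarith)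
      have hmono : ((n : ℝ) - 1) / 2 * Real.log 2 ≤ (x - 1) / 2 * Real.log 2 := by
        apply mul_le_mul_of_nonneg_right _ hlog2pos.le
        linarith
      linarith
  have hdiv : (primePi x : ℝ) - 1 <
      (((x - 1) / 2) * Real.log 2 + chebyshevTheta x) / Real.log x := by
    rw [lt_div_iff₀ hlogx]
    exact hmain
  have hZ : (primePi x : ℤ) ≤ ⌈(((x - 1) / 2) * Real.log 2 + chebyshevTheta x) / Real.log x⌉ := by
    have h1 : ((primePi x : ℤ) - 1) <
        ⌈(((x - 1) / 2) * Real.log 2 + chebyshevTheta x) / Real.log x⌉ := by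
      rw [Int.lt_ceil]
      push_cast
      exact hdiv
    omega
  exact_mod_cast hZ
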